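/- arXiv:math/0602468 — 2 statements merged into one kernel-verified Lean document; each statement's English description precedes it below -/
import Mathlib

section
/- Let A, B, C : [0,1] → ℝ be continuous with ∫₀¹ C(t) dt = 0. Suppose there exist real numbers a and b such that the function t ↦ a·A(t)·exp(∫₀ᵗ C(s) ds) + b·B(t) is not identically zero on [0,1] and does not change sign on [0,1]. Then the Abel equation x' = A(t)x³ + B(t)x² + C(t)x has at most one periodic orbit with nonzero initial condition, and every periodic orbit γ with γ(0) ≠ 0 is hyperbolic. -/
/-- `γ : ℝ → ℝ` solves the general Abel equation `x' = A(t)x³ + B(t)x² + C(t)x` on `[0,1]`. -/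
def IsGeneralAbelSolution (A B C : ℝ → ℝ) (γ : ℝ → ℝ) : Prop :=
  ∀ t ∈ Set.Icc (0:ℝ) 1,
    HasDerivWithinAt γ (A t * γ t ^ 3 + B t * γ t ^ 2 + C t * γ t) (Set.Icc (0:ℝ) 1) t

/-- A periodic orbit: a solution on `[0,1]` with `γ 0 = γ 1`. -/
def IsGeneralPeriodicOrbit (A B C : ℝ → ℝ) (γ : ℝ → ℝ) : Prop :=
  IsGeneralAbelSolution A B C γ ∧ γ 0 = γ 1

/-- A periodic orbit is hyperbolic iff `∫₀¹ (3A(t)γ(t)² + 2B(t)γ(t) + C(t)) dt ≠ 0`. -/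
def IsGeneralHyperbolic (A B C : ℝ → ℝ) (γ : ℝ → ℝ) : Prop :=
  (∫ t in (0:ℝ)..1, (3 * A t * γ t ^ 2 + 2 * B t * γ t + C t)) ≠ 0


open Set MeasureTheory intervalIntegral Topology


lemma primitive_hasDerivAt {f : ℝ → ℝ} (hf : ContinuousOn f (Set.Icc 0 1))
    {t : ℝ} (ht : t ∈ Set.Ioo (0:ℝ) 1) :
    HasDerivAt (fun u => ∫ s in (0:ℝ)..u, f s) (f t) t := by
  have hInt : IntervalIntegrable f volume 0 t := by
    apply ContinuousOn.intervalIntegrable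
    apply hf.mono
    rw [Set.uIcc_of_le ht.1.le]
    exact Set.Icc_subset_Icc le_rfl ht.2.le
  have hmeas : StronglyMeasurableAtFilter f (𝓝 t) :=
    ⟨Set.Ioo 0 1, Ioo_mem_nhds ht.1 ht.2,
      (hf.mono Set.Ioo_subset_Icc_self).aestronglyMeasurable measurableSet_Ioo⟩
  exact intervalIntegral.integral_hasDerivAt_right hInt hmeas
    (hf.continuousAt (Icc_mem_nhds ht.1 ht.2))


lemma primitive_continuousOn {f : ℝ → ℝ} (hf : ContinuousOn f (Set.Icc 0 1)) :
    ContinuousOn (fun u => ∫ s in (0:ℝ)..u, f s) (Set.Icc 0 1) := by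
  have h : IntegrableOn f (Set.uIcc 0 1) volume := by
    rw [Set.uIcc_of_le (zero_le_one : (0:ℝ) ≤ 1)]
    exact (hf.mono (by norm_num)).integrableOn_Icc
  simpa [Set.uIcc_of_le (zero_le_one : (0:ℝ) ≤ 1)] using continuousOn_primitive_interval h


lemma ftc2 {g d : ℝ → ℝ} (hg : ContinuousOn g (Set.Icc 0 1))
    (hg' : ∀ t ∈ Set.Ioo (0:ℝ) 1, HasDerivAt g (d t) t)
    (hd : ContinuousOn d (Set.Icc 0 1))
    {u v : ℝ} (hu : u ∈ Set.Icc (0:ℝ) 1) (hv : v ∈ Set.Icc (0:ℝ) 1) (huv : u ≤ v) :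
    ∫ t in u..v, d t = g v - g u := by
  apply intervalIntegral.integral_eq_sub_of_hasDerivAt_of_le huv
    (hg.mono (Set.Icc_subset_Icc hu.1 hv.2))
    (fun t ht => hg' t ⟨lt_of_le_of_lt hu.1 ht.1, lt_of_lt_of_le ht.2 hv.2⟩)
  apply ContinuousOn.intervalIntegrable
  apply hd.mono; rw [Set.uIcc_of_le huv]; exact Set.Icc_subset_Icc hu.1 hv.2


lemma sign_const {h : ℝ → ℝ} (hc : ContinuousOn h (Set.Icc 0 1))
    (h0 : ∀ t ∈ Set.Icc (0:ℝ) 1, h t ≠ 0) :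
    (∀ t ∈ Set.Icc (0:ℝ) 1, 0 < h t) ∨ (∀ t ∈ Set.Icc (0:ℝ) 1, h t < 0) := by
  by_contra hcon
  push_neg at hcon
  obtain ⟨⟨x, hx, hx'⟩, ⟨y, hy, hy'⟩⟩ := hcon
  have hxy : Set.uIcc x y ⊆ Set.Icc 0 1 := by
    rw [← Set.uIcc_of_le (zero_le_one : (0:ℝ) ≤ 1)]
    exact Set.uIcc_subset_uIcc (by rwa [Set.uIcc_of_le (zero_le_one : (0:ℝ) ≤ 1)])
      (by rwa [Set.uIcc_of_le (zero_le_one : (0:ℝ) ≤ 1)])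
  have h0' : (0:ℝ) ∈ Set.uIcc (h x) (h y) := by
    rw [Set.mem_uIcc]; left; exact ⟨hx', hy'⟩
  obtain ⟨z, hz, hz0⟩ := intermediate_value_uIcc (hc.mono hxy) h0'
  exact h0 z (hxy hz) hz0


lemma integral_pos_of_nonneg {h : ℝ → ℝ} (hc : ContinuousOn h (Set.Icc 0 1))
    (hnn : ∀ t ∈ Set.Icc (0:ℝ) 1, 0 ≤ h t)
    (hne : ∃ t ∈ Set.Icc (0:ℝ) 1, h t ≠ 0) :
    0 < ∫ t in (0:ℝ)..1, h t := by
  obtain ⟨t₀, ht₀, hne⟩ := hne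
  have hpos : 0 < h t₀ := lt_of_le_of_ne (hnn t₀ ht₀) (Ne.symm hne)
  set c := h t₀ / 2 with hc_def
  have hcpos : 0 < c := by positivity
  have hev : ∀ᶠ x in 𝓝[Set.Icc (0:ℝ) 1] t₀, c < h x :=
    (hc t₀ ht₀).eventually (eventually_gt_nhds (by rw [hc_def]; linarith))
  have hev' : {x | c < h x} ∈ 𝓝[Set.Icc (0:ℝ) 1] t₀ := hev
  rw [Metric.mem_nhdsWithin_iff] at hev'
  obtain ⟨δ, hδ, hball'⟩ := hev'
  have hball : ∀ x : ℝ, dist x t₀ < δ → x ∈ Set.Icc (0:ℝ) 1 → c < h x :=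
    fun x h1 h2 => hball' ⟨Metric.mem_ball.mpr h1, h2⟩
  obtain ⟨h0, h1⟩ := ht₀
  set u := max 0 (t₀ - δ/2) with hu_def
  set v := min 1 (t₀ + δ/2) with hv_def
  have hu0 : 0 ≤ u := le_max_left _ _
  have hv1 : v ≤ 1 := min_le_left _ _
  have hu1 : u ≤ 1 := max_le zero_le_one (by linarith)
  have hv0 : 0 ≤ v := le_min zero_le_one (by linarith)
  have huv : u < v := by
    rw [hu_def, hv_def]
    apply max_lt <;> apply lt_min <;> linarith
  have hsub : Set.Icc u v ⊆ Set.Icc 0 1 := Set.Icc_subset_Icc hu0 hv1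
  have hbig : ∀ x ∈ Set.Icc u v, c ≤ h x := by
    intro x hx
    have hx01 : x ∈ Set.Icc (0:ℝ) 1 := hsub hx
    have : dist x t₀ < δ := by
      rw [Real.dist_eq, abs_lt]
      have hxu := hx.1; have hxv := hx.2
      rw [hu_def] at hxu; rw [hv_def] at hxv
      have := le_max_right 0 (t₀ - δ/2)
      have := min_le_right 1 (t₀ + δ/2)
      constructor <;> nlinarith
    exact (hball x this hx01).le
  have hi : ∀ x y : ℝ, x ∈ Set.Icc (0:ℝ) 1 → y ∈ Set.Icc (0:ℝ) 1 → x ≤ y →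
      IntervalIntegrable h volume x y := by
    intro x y hx hy hxy
    apply ContinuousOn.intervalIntegrable
    apply hc.mono; rw [Set.uIcc_of_le hxy]; exact Set.Icc_subset_Icc hx.1 hy.2
  have hmid : c * (v - u) ≤ ∫ t in u..v, h t := by
    have := intervalIntegral.integral_mono_on (μ := volume) (f := fun _ => c) (g := h) huv.le
      (intervalIntegrable_const) (hi u v ⟨hu0, hu1⟩ ⟨hv0, hv1⟩ huv.le) (fun x hx => hbig x hx)
    rw [intervalIntegral.integral_const, smul_eq_mul] at this
    linarith
  have hl : 0 ≤ ∫ t in (0:ℝ)..u, h t :=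
    intervalIntegral.integral_nonneg hu0 (fun x hx => hnn x ⟨hx.1, hx.2.trans hu1⟩)
  have hr : 0 ≤ ∫ t in v..1, h t :=
    intervalIntegral.integral_nonneg hv1 (fun x hx => hnn x ⟨hv0.trans hx.1, hx.2⟩)
  have hsplit : (∫ t in (0:ℝ)..1, h t)
      = (∫ t in (0:ℝ)..u, h t) + (∫ t in u..v, h t) + (∫ t in v..1, h t) := by
    rw [intervalIntegral.integral_add_adjacent_intervals (hi 0 u ⟨le_rfl, zero_le_one⟩ ⟨hu0, hu1⟩ hu0)
      (hi u v ⟨hu0, hu1⟩ ⟨hv0, hv1⟩ huv.le)]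
    rw [intervalIntegral.integral_add_adjacent_intervals (hi 0 v ⟨le_rfl, zero_le_one⟩ ⟨hv0, hv1⟩ hv0)
      (hi v 1 ⟨hv0, hv1⟩ ⟨zero_le_one, le_rfl⟩ hv1)]
  rw [hsplit]
  nlinarith


lemma abel_eqOn {A B C γ₁ γ₂ : ℝ → ℝ}
    (hA : ContinuousOn A (Set.Icc 0 1)) (hB : ContinuousOn B (Set.Icc 0 1))
    (hC : ContinuousOn C (Set.Icc 0 1))
    (h1 : IsGeneralAbelSolution A B C γ₁) (h2 : IsGeneralAbelSolution A B C γ₂)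
    {t₀ : ℝ} (ht₀ : t₀ ∈ Set.Icc (0:ℝ) 1) (heq : γ₁ t₀ = γ₂ t₀) :
    Set.EqOn γ₁ γ₂ (Set.Icc t₀ 1) := by
  have hIcc : Set.Icc t₀ 1 ⊆ Set.Icc (0:ℝ) 1 := Set.Icc_subset_Icc ht₀.1 le_rfl
  have hγ₁c : ContinuousOn γ₁ (Set.Icc 0 1) := fun t ht => (h1 t ht).continuousWithinAt
  have hγ₂c : ContinuousOn γ₂ (Set.Icc 0 1) := fun t ht => (h2 t ht).continuousWithinAt
  obtain ⟨M₁, hM₁⟩ := isCompact_Icc.exists_bound_of_continuousOn hγ₁c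
  obtain ⟨M₂, hM₂⟩ := isCompact_Icc.exists_bound_of_continuousOn hγ₂c
  obtain ⟨KA, hKA⟩ := isCompact_Icc.exists_bound_of_continuousOn hA
  obtain ⟨KB, hKB⟩ := isCompact_Icc.exists_bound_of_continuousOn hB
  obtain ⟨KC, hKC⟩ := isCompact_Icc.exists_bound_of_continuousOn hC
  set M : ℝ := max M₁ M₂ with hM_def
  have h0mem : (0:ℝ) ∈ Set.Icc (0:ℝ) 1 := by norm_num
  have hM0 : 0 ≤ M := le_trans (norm_nonneg (γ₁ 0)) ((hM₁ 0 h0mem).trans (le_max_left _ _))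
  have hKA0 : 0 ≤ KA := le_trans (norm_nonneg (A 0)) (hKA 0 h0mem)
  have hKB0 : 0 ≤ KB := le_trans (norm_nonneg (B 0)) (hKB 0 h0mem)
  have hKC0 : 0 ≤ KC := le_trans (norm_nonneg (C 0)) (hKC 0 h0mem)
  set π : ℝ → ℝ := fun t => max 0 (min 1 t) with hπ_def
  have hπ : ∀ t ∈ Set.Icc (0:ℝ) 1, π t = t := by
    intro t ht
    rw [hπ_def]
    simp only [min_eq_right ht.2, max_eq_right ht.1]
  have hπmem : ∀ t, π t ∈ Set.Icc (0:ℝ) 1 := by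
    intro t
    constructor
    · exact le_max_left _ _
    · exact max_le zero_le_one (min_le_left _ _)
  set v : ℝ → ℝ → ℝ := fun t x => A (π t) * x^3 + B (π t) * x^2 + C (π t) * x with hv_def
  set L : ℝ := 3*KA*M^2 + 2*KB*M + KC with hL_def
  have hL0 : 0 ≤ L := by positivity
  have hv : ∀ t, LipschitzOnWith (Real.toNNReal L) (v t) (Set.Icc (-M) M) := by
    intro t
    apply (convex_Icc _ _).lipschitzOnWith_of_nnnorm_hasDerivWithin_le
      (f' := fun x => 3*A (π t)*x^2 + 2*B (π t)*x + C (π t))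
    · intro x hx
      have hd : HasDerivAt (v t) (3*A (π t)*x^2 + 2*B (π t)*x + C (π t)) x := by
        have := (((hasDerivAt_pow 3 x).const_mul (A (π t))).add
          ((hasDerivAt_pow 2 x).const_mul (B (π t)))).add ((hasDerivAt_id x).const_mul (C (π t)))
        refine this.congr_deriv ?_
        ring
      exact hd.hasDerivWithinAt
    · intro x hx
      rw [← NNReal.coe_le_coe, coe_nnnorm, Real.norm_eq_abs, Real.coe_toNNReal _ hL0]
      have hxM : |x| ≤ M := abs_le.mpr ⟨hx.1, hx.2⟩
      have hA' : |A (π t)| ≤ KA := (Real.norm_eq_abs _ ▸ hKA _ (hπmem t))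
      have hB' : |B (π t)| ≤ KB := (Real.norm_eq_abs _ ▸ hKB _ (hπmem t))
      have hC' : |C (π t)| ≤ KC := (Real.norm_eq_abs _ ▸ hKC _ (hπmem t))
      have hx2 : |x|^2 ≤ M^2 := by nlinarith [abs_nonneg x]
      calc |3*A (π t)*x^2 + 2*B (π t)*x + C (π t)|
          ≤ |3*A (π t)*x^2 + 2*B (π t)*x| + |C (π t)| := abs_add_le _ _
        _ ≤ (|3*A (π t)*x^2| + |2*B (π t)*x|) + |C (π t)| :=
            add_le_add (abs_add_le _ _) le_rfl
        _ = |3*A (π t)*x^2| + |2*B (π t)*x| + |C (π t)| := by ring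
        _ = 3 * |A (π t)| * |x| ^ 2 + 2 * |B (π t)| * |x| + |C (π t)| := by
            rw [abs_mul, abs_mul, abs_mul, abs_mul, abs_pow]
            norm_num
        _ ≤ 3*KA*M^2 + 2*KB*M + KC := by
            have e1 : |A (π t)| * |x| ^ 2 ≤ KA * M ^ 2 :=
              mul_le_mul hA' hx2 (by positivity) hKA0
            have e2 : |B (π t)| * |x| ≤ KB * M :=
              mul_le_mul hB' hxM (abs_nonneg x) hKB0
            linarith
  have hmem : ∀ t, t ∈ Set.Ico t₀ 1 → t ∈ Set.Icc (0:ℝ) 1 :=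
    fun t ht => ⟨ht₀.1.trans ht.1, ht.2.le⟩
  have hderiv : ∀ (γ : ℝ → ℝ), IsGeneralAbelSolution A B C γ →
      ∀ t ∈ Set.Ico t₀ 1, HasDerivWithinAt γ (v t (γ t)) (Set.Ici t) t := by
    intro γ hγ t ht
    have ht01 := hmem t ht
    have hnh : Set.Icc (0:ℝ) 1 ∈ 𝓝[Set.Ici t] t := by
      apply Filter.mem_of_superset
        (Filter.inter_mem self_mem_nhdsWithin
          (mem_nhdsWithin_of_mem_nhds (Iic_mem_nhds ht.2)))
      intro x hx
      exact ⟨ht01.1.trans hx.1, hx.2⟩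
    have := (hγ t ht01).mono_of_mem_nhdsWithin hnh
    rw [hv_def]
    simp only [hπ t ht01]
    exact this
  have hs : ∀ (γ : ℝ → ℝ), (∀ t ∈ Set.Icc (0:ℝ) 1, ‖γ t‖ ≤ M) →
      ∀ t ∈ Set.Ico t₀ 1, γ t ∈ Set.Icc (-M) M := by
    intro γ hγ t ht
    have := hγ t (hmem t ht)
    rw [Real.norm_eq_abs] at this
    exact ⟨neg_le_of_abs_le this, le_of_abs_le this⟩
  exact ODE_solution_unique_of_mem_Icc_right (fun t _ => hv t)
    (hγ₁c.mono hIcc) (hderiv γ₁ h1)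
    (hs γ₁ (fun t ht => (hM₁ t ht).trans (le_max_left _ _)))
    (hγ₂c.mono hIcc) (hderiv γ₂ h2)
    (hs γ₂ (fun t ht => (hM₂ t ht).trans (le_max_right _ _))) heq


lemma orbit_main (A B C : ℝ → ℝ) {γ : ℝ → ℝ} (e Φ χ : ℝ → ℝ)
    (hA : ContinuousOn A (Set.Icc 0 1)) (hB : ContinuousOn B (Set.Icc 0 1))
    (hC : ContinuousOn C (Set.Icc 0 1))
    (hC0 : (∫ t in (0:ℝ)..1, C t) = 0) (a b : ℝ)
    (he : e = fun t => Real.exp (∫ s in (0:ℝ)..t, C s))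
    (hΦdef : Φ = fun t => a * e t - b * γ t)
    (hχdef : χ = fun t => a * A t * e t + b * B t)
    (hpos : ∀ t ∈ Set.Icc (0:ℝ) 1, 0 ≤ χ t)
    (hne : ∃ t ∈ Set.Icc (0:ℝ) 1, χ t ≠ 0)
    (hγ : IsGeneralPeriodicOrbit A B C γ) (h0 : γ 0 ≠ 0) :
    (∀ t ∈ Set.Icc (0:ℝ) 1, Φ t ≠ 0) ∧
    ((∫ t in (0:ℝ)..1, (3 * A t * γ t ^ 2 + 2 * B t * γ t + C t)) ≠ 0) ∧
    ((∫ t in (0:ℝ)..1, e t ^ 2 * (A t * γ t + B t) / Φ t) = 0) := by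
  obtain ⟨hγs, hper⟩ := hγ
  have hγc : ContinuousOn γ (Set.Icc 0 1) := fun t ht => (hγs t ht).continuousWithinAt
  have hγne : ∀ t ∈ Set.Icc (0:ℝ) 1, γ t ≠ 0 := by
    intro t ht hz
    have hzsol : IsGeneralAbelSolution A B C (fun _ => (0:ℝ)) := by
      intro s hs
      simpa using hasDerivWithinAt_const (𝕜 := ℝ) s (Set.Icc (0:ℝ) 1) (0:ℝ)
    have hEq := abel_eqOn hA hB hC hγs hzsol ht (by simpa using hz)
    have h1 : γ 1 = 0 := hEq ⟨ht.2, le_rfl⟩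
    exact h0 (hper.trans h1)
  have hγd : ∀ t ∈ Set.Ioo (0:ℝ) 1,
      HasDerivAt γ (A t * γ t ^ 3 + B t * γ t ^ 2 + C t * γ t) t :=
    fun t ht => (hγs t (Set.Ioo_subset_Icc_self ht)).hasDerivAt (Icc_mem_nhds ht.1 ht.2)
  set cI : ℝ → ℝ := fun t => ∫ s in (0:ℝ)..t, C s with hcI_def
  have hcIc : ContinuousOn cI (Set.Icc 0 1) := primitive_continuousOn hC
  have hcId : ∀ t ∈ Set.Ioo (0:ℝ) 1, HasDerivAt cI (C t) t :=
    fun t ht => primitive_hasDerivAt hC ht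
  have hcI0 : cI 0 = 0 := intervalIntegral.integral_same
  have hcI1 : cI 1 = 0 := hC0
  have heT : ∀ t, e t = Real.exp (cI t) := fun t => by rw [he]
  have hec : ContinuousOn e (Set.Icc 0 1) := by
    rw [he]; exact Real.continuous_exp.comp_continuousOn hcIc
  have hepos : ∀ t, 0 < e t := fun t => by rw [heT t]; exact Real.exp_pos _
  have hed : ∀ t ∈ Set.Ioo (0:ℝ) 1, HasDerivAt e (C t * e t) t := by
    intro t ht
    rw [he]
    have := (hcId t ht).exp; rw [mul_comm] at this; exact this
  have he0 : e 0 = 1 := by rw [heT 0, hcI0, Real.exp_zero]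
  have he1 : e 1 = 1 := by rw [heT 1, hcI1, Real.exp_zero]
  have hχc : ContinuousOn χ (Set.Icc 0 1) := by
    rw [hχdef]
    exact ((continuousOn_const.mul hA).mul hec).add (continuousOn_const.mul hB)
  have hΦc : ContinuousOn Φ (Set.Icc 0 1) := by
    rw [hΦdef]
    exact (continuousOn_const.mul hec).sub (continuousOn_const.mul hγc)
  have hΦper : Φ 1 = Φ 0 := by rw [hΦdef]; simp only [he0, he1, ← hper]
  set p : ℝ → ℝ := fun t => C t + A t * γ t ^ 2 with hp_def
  have hpc : ContinuousOn p (Set.Icc 0 1) := hC.add (hA.mul (hγc.pow 2))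
  have hΦd : ∀ t ∈ Set.Ioo (0:ℝ) 1, HasDerivAt Φ (p t * Φ t - γ t ^ 2 * χ t) t := by
    intro t ht
    have hd := ((hed t ht).const_mul a).sub ((hγd t ht).const_mul b)
    have : Φ = fun u => a * e u - b * γ u := hΦdef
    rw [this]
    refine hd.congr_deriv ?_
    simp only [hp_def, hΦdef, hχdef]
    ring
  set P : ℝ → ℝ := fun t => ∫ s in (0:ℝ)..t, p s with hP_def
  have hPc : ContinuousOn P (Set.Icc 0 1) := primitive_continuousOn hpc
  have hPd : ∀ t ∈ Set.Ioo (0:ℝ) 1, HasDerivAt P (p t) t :=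
    fun t ht => primitive_hasDerivAt hpc ht
  have hP0 : P 0 = 0 := intervalIntegral.integral_same
  set EE : ℝ → ℝ := fun t => Real.exp (-P t) with hEE_def
  have hEEc : ContinuousOn EE (Set.Icc 0 1) := Real.continuous_exp.comp_continuousOn hPc.neg
  have hEEpos : ∀ t, 0 < EE t := fun t => Real.exp_pos _
  have hEE0 : EE 0 = 1 := by rw [hEE_def]; simp [hP0]
  have hEEd : ∀ t ∈ Set.Ioo (0:ℝ) 1, HasDerivAt EE (-(p t) * EE t) t := by
    intro t ht
    simpa [mul_comm] using ((hPd t ht).neg).exp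
  set q : ℝ → ℝ := fun t => γ t ^ 2 * χ t * EE t with hq_def
  have hqc : ContinuousOn q (Set.Icc 0 1) := ((hγc.pow 2).mul hχc).mul hEEc
  have hqnn : ∀ t ∈ Set.Icc (0:ℝ) 1, 0 ≤ q t := by
    intro t ht
    exact mul_nonneg (mul_nonneg (sq_nonneg _) (hpos t ht)) (hEEpos t).le
  have hNc : ContinuousOn (fun t => Φ t * EE t) (Set.Icc 0 1) := hΦc.mul hEEc
  have hNd : ∀ t ∈ Set.Ioo (0:ℝ) 1, HasDerivAt (fun t => Φ t * EE t) (-(q t)) t := by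
    intro t ht
    have := (hΦd t ht).mul (hEEd t ht)
    refine this.congr_deriv ?_
    simp only [hq_def]
    ring
  have key : ∀ u v : ℝ, u ∈ Set.Icc (0:ℝ) 1 → v ∈ Set.Icc (0:ℝ) 1 → u ≤ v →
      Φ v * EE v - Φ u * EE u = -∫ t in u..v, q t := by
    intro u v hu hv huv
    rw [← ftc2 hNc hNd hqc.neg hu hv huv, intervalIntegral.integral_neg]
  have hQpos : 0 < ∫ t in (0:ℝ)..1, q t := by
    apply integral_pos_of_nonneg hqc hqnn
    obtain ⟨t₁, ht₁, hχt₁⟩ := hne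
    exact ⟨t₁, ht₁, mul_ne_zero (mul_ne_zero (pow_ne_zero 2 (hγne t₁ ht₁)) hχt₁)
      (hEEpos t₁).ne'⟩
  have hmain : Φ 0 * (EE 1 - 1) = -∫ t in (0:ℝ)..1, q t := by
    have := key 0 1 (by norm_num) (by norm_num) zero_le_one
    rw [hEE0, mul_one, hΦper] at this
    linarith [this]
  -- Φ never vanishes on [0,1]
  have hΦne : ∀ t ∈ Set.Icc (0:ℝ) 1, Φ t ≠ 0 := by
    rcases lt_trichotomy (EE 1) 1 with hlt | heq1 | hgt
    · have hΦ0pos : 0 < Φ 0 := by nlinarith [hQpos, hmain]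
      intro t ht
      have h1m : (1:ℝ) ∈ Set.Icc (0:ℝ) 1 := by norm_num
      have hk := key t 1 ht h1m ht.2
      have hge : 0 ≤ ∫ s in t..1, q s :=
        intervalIntegral.integral_nonneg ht.2 (fun x hx => hqnn x ⟨ht.1.trans hx.1, hx.2⟩)
      rw [hΦper] at hk
      have hNt : 0 < Φ t * EE t := by nlinarith [hEEpos 1, mul_pos hΦ0pos (hEEpos 1)]
      intro hzero
      rw [hzero, zero_mul] at hNt
      exact lt_irrefl 0 hNt
    · exfalso
      rw [heq1] at hmain
      simp only [sub_self, mul_zero] at hmain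
      linarith
    · have hΦ0neg : Φ 0 < 0 := by nlinarith [hQpos, hmain]
      intro t ht
      have h0m : (0:ℝ) ∈ Set.Icc (0:ℝ) 1 := by norm_num
      have hk := key 0 t h0m ht ht.1
      have hge : 0 ≤ ∫ s in (0:ℝ)..t, q s :=
        intervalIntegral.integral_nonneg ht.1 (fun x hx => hqnn x ⟨hx.1, hx.2.trans ht.2⟩)
      rw [hEE0, mul_one] at hk
      have hNt : Φ t * EE t < 0 := by nlinarith
      intro hzero
      rw [hzero, zero_mul] at hNt
      exact lt_irrefl 0 hNt
  refine ⟨hΦne, ?_, ?_⟩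
  -- hyperbolicity
  · have hEE1ne : EE 1 ≠ 1 := by
      intro h
      rw [h] at hmain
      simp only [sub_self, mul_zero] at hmain
      linarith
    have hP1ne : P 1 ≠ 0 := by
      intro h
      apply hEE1ne
      rw [hEE_def]
      simp [h]
    -- ∫ (Aγ² + Bγ) = 0
    have hlogγc : ContinuousOn (fun t => Real.log (γ t)) (Set.Icc 0 1) := fun t ht =>
      (Real.continuousAt_log (hγne t ht)).comp_continuousWithinAt (hγc t ht)
    have hint2 : (∫ t in (0:ℝ)..1, (A t * γ t ^ 2 + B t * γ t)) = 0 := by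
      have hg'' : ∀ t ∈ Set.Ioo (0:ℝ) 1,
          HasDerivAt (fun u => Real.log (γ u) - cI u) (A t * γ t ^ 2 + B t * γ t) t := by
        intro t ht
        have hd := ((hγd t ht).log (hγne t (Set.Ioo_subset_Icc_self ht))).sub (hcId t ht)
        refine hd.congr_deriv ?_
        have hγt := hγne t (Set.Ioo_subset_Icc_self ht)
        field_simp
        ring
      have := ftc2 (hlogγc.sub hcIc) hg''
        ((hA.mul (hγc.pow 2)).add (hB.mul hγc))
        (by norm_num : (0:ℝ) ∈ Set.Icc (0:ℝ) 1) (by norm_num : (1:ℝ) ∈ Set.Icc (0:ℝ) 1)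
        zero_le_one
      rw [this]
      simp only [Pi.sub_apply]
      rw [hcI0, hcI1, ← hper]
      ring
    have hsplit : (∫ t in (0:ℝ)..1, (3 * A t * γ t ^ 2 + 2 * B t * γ t + C t))
        = (∫ t in (0:ℝ)..1, p t) + 2 * ∫ t in (0:ℝ)..1, (A t * γ t ^ 2 + B t * γ t) := by
      have hu : Set.uIcc (0:ℝ) 1 = Set.Icc 0 1 := Set.uIcc_of_le zero_le_one
      have hi1 : IntervalIntegrable p volume 0 1 := (hu ▸ hpc).intervalIntegrable
      have hi2 : IntervalIntegrable (fun t => A t * γ t ^ 2 + B t * γ t) volume 0 1 :=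
        (hu ▸ ((hA.mul (hγc.pow 2)).add (hB.mul hγc))).intervalIntegrable
      have hcongr : (∫ t in (0:ℝ)..1, (3 * A t * γ t ^ 2 + 2 * B t * γ t + C t))
          = ∫ t in (0:ℝ)..1, (p t + 2 * (A t * γ t ^ 2 + B t * γ t)) := by
        apply intervalIntegral.integral_congr
        intro t ht
        simp only [hp_def]
        ring
      rw [hcongr, intervalIntegral.integral_add hi1 (hi2.const_mul 2),
        intervalIntegral.integral_const_mul]
    rw [hsplit, hint2]
    simpa [hP_def] using hP1ne
  -- key integral
  · have hintc : ContinuousOn (fun t => e t ^ 2 * (A t * γ t + B t) / Φ t) (Set.Icc 0 1) :=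
      ((hec.pow 2).mul ((hA.mul hγc).add hB)).div hΦc hΦne
    have h0m : (0:ℝ) ∈ Set.Icc (0:ℝ) 1 := by norm_num
    have h1m : (1:ℝ) ∈ Set.Icc (0:ℝ) 1 := by norm_num
    by_cases ha : a = 0
    · subst ha
      have hb : b ≠ 0 := by
        rintro rfl
        obtain ⟨t₁, ht₁, hx⟩ := hne
        apply hx
        rw [hχdef]
        simp
      set g : ℝ → ℝ := fun t => (e t / γ t) ^ 2 / (2 * b) with hg_def
      have hgc : ContinuousOn g (Set.Icc 0 1) := ((hec.div hγc hγne).pow 2).div_const _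
      have hgd : ∀ t ∈ Set.Ioo (0:ℝ) 1,
          HasDerivAt g (e t ^ 2 * (A t * γ t + B t) / Φ t) t := by
        intro t ht
        have hγt := hγne t (Set.Ioo_subset_Icc_self ht)
        have h1 : HasDerivAt (fun u => e u / γ u)
            ((C t * e t * γ t - e t * (A t * γ t ^ 3 + B t * γ t ^ 2 + C t * γ t)) / γ t ^ 2) t :=
          (hed t ht).div (hγd t ht) hγt
        have h2 := (h1.pow 2).div_const (2 * b)
        refine h2.congr_deriv ?_
        have hΦt : Φ t = -(b * γ t) := by rw [hΦdef]; simp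
        rw [hΦt]
        simp only [Nat.cast_ofNat, Nat.reduceSub, pow_one]
        field_simp
        ring
      have hval := ftc2 hgc hgd hintc h0m h1m zero_le_one
      rw [hval, hg_def]
      simp only [he0, he1, ← hper]
      ring
    · have hlogγc : ContinuousOn (fun t => Real.log (γ t)) (Set.Icc 0 1) := fun t ht =>
        (Real.continuousAt_log (hγne t ht)).comp_continuousWithinAt (hγc t ht)
      have hlogΦc : ContinuousOn (fun t => Real.log (Φ t)) (Set.Icc 0 1) := fun t ht =>
        (Real.continuousAt_log (hΦne t ht)).comp_continuousWithinAt (hΦc t ht)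
      set g : ℝ → ℝ :=
        fun t => -(e t / (a * γ t)) + b / a ^ 2 * (Real.log (γ t) - Real.log (Φ t)) with hg_def
      have hgc : ContinuousOn g (Set.Icc 0 1) :=
        ((hec.div (continuousOn_const.mul hγc)
          (fun t ht => mul_ne_zero ha (hγne t ht))).neg).add
          (continuousOn_const.mul (hlogγc.sub hlogΦc))
      have hgd : ∀ t ∈ Set.Ioo (0:ℝ) 1,
          HasDerivAt g (e t ^ 2 * (A t * γ t + B t) / Φ t) t := by
        intro t ht
        have hγt := hγne t (Set.Ioo_subset_Icc_self ht)
        have hΦt := hΦne t (Set.Ioo_subset_Icc_self ht)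
        have d1 : HasDerivAt (fun u => e u / (a * γ u))
            ((C t * e t * (a * γ t) - e t * (a * (A t * γ t ^ 3 + B t * γ t ^ 2 + C t * γ t)))
              / (a * γ t) ^ 2) t :=
          (hed t ht).div ((hγd t ht).const_mul a) (mul_ne_zero ha hγt)
        have d2 : HasDerivAt (fun u => Real.log (γ u))
            ((A t * γ t ^ 3 + B t * γ t ^ 2 + C t * γ t) / γ t) t := (hγd t ht).log hγt
        have d3 : HasDerivAt (fun u => Real.log (Φ u))
            ((p t * Φ t - γ t ^ 2 * χ t) / Φ t) t := (hΦd t ht).log hΦt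
        have total := (d1.neg).add ((d2.sub d3).const_mul (b / a ^ 2))
        refine total.congr_deriv ?_
        have h1 : Φ t = a * e t - b * γ t := by rw [hΦdef]
        have h2 : χ t = a * A t * e t + b * B t := by rw [hχdef]
        have h3 : p t = C t + A t * γ t ^ 2 := by rw [hp_def]
        have hΦt' : a * e t - b * γ t ≠ 0 := h1 ▸ hΦt
        rw [h1, h2, h3] at *
        have hΦt'' : e t * a - γ t * b ≠ 0 := by rwa [mul_comm (e t), mul_comm (γ t)]
        field_simp
        ring
      have hval := ftc2 hgc hgd hintc h0m h1m zero_le_one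
      rw [hval, hg_def]
      simp only [he0, he1, ← hper, hΦper]
      ring


lemma master (A B C : ℝ → ℝ)
    (hA : ContinuousOn A (Set.Icc 0 1)) (hB : ContinuousOn B (Set.Icc 0 1))
    (hC : ContinuousOn C (Set.Icc 0 1))
    (hC0 : (∫ t in (0:ℝ)..1, C t) = 0) (a b : ℝ)
    (hpos : ∀ t ∈ Set.Icc (0:ℝ) 1,
      0 ≤ a * A t * Real.exp (∫ s in (0:ℝ)..t, C s) + b * B t)
    (hne : ∃ t ∈ Set.Icc (0:ℝ) 1,
      a * A t * Real.exp (∫ s in (0:ℝ)..t, C s) + b * B t ≠ 0) :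
    (∀ γ₁ γ₂ : ℝ → ℝ,
      IsGeneralPeriodicOrbit A B C γ₁ → IsGeneralPeriodicOrbit A B C γ₂ →
      γ₁ 0 ≠ 0 → γ₂ 0 ≠ 0 → Set.EqOn γ₁ γ₂ (Set.Icc 0 1)) ∧
    (∀ γ : ℝ → ℝ, IsGeneralPeriodicOrbit A B C γ → γ 0 ≠ 0 →
      IsGeneralHyperbolic A B C γ) := by
  have h0m : (0:ℝ) ∈ Set.Icc (0:ℝ) 1 := by norm_num
  constructor
  · intro γ₁ γ₂ hγ₁ hγ₂ h01 h02
    by_cases h00 : γ₁ 0 = γ₂ 0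
    · exact abel_eqOn hA hB hC hγ₁.1 hγ₂.1 h0m h00
    · exfalso
      obtain ⟨hΦ₁ne, -, hI₁⟩ := orbit_main A B C
        (fun t => Real.exp (∫ s in (0:ℝ)..t, C s))
        (fun t => a * Real.exp (∫ s in (0:ℝ)..t, C s) - b * γ₁ t)
        (fun t => a * A t * Real.exp (∫ s in (0:ℝ)..t, C s) + b * B t)
        hA hB hC hC0 a b rfl rfl rfl hpos hne hγ₁ h01
      obtain ⟨hΦ₂ne, -, hI₂⟩ := orbit_main A B C
        (fun t => Real.exp (∫ s in (0:ℝ)..t, C s))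
        (fun t => a * Real.exp (∫ s in (0:ℝ)..t, C s) - b * γ₂ t)
        (fun t => a * A t * Real.exp (∫ s in (0:ℝ)..t, C s) + b * B t)
        hA hB hC hC0 a b rfl rfl rfl hpos hne hγ₂ h02
      have hγ₁c : ContinuousOn γ₁ (Set.Icc 0 1) := fun t ht => (hγ₁.1 t ht).continuousWithinAt
      have hγ₂c : ContinuousOn γ₂ (Set.Icc 0 1) := fun t ht => (hγ₂.1 t ht).continuousWithinAt
      have hcIc : ContinuousOn (fun u => ∫ s in (0:ℝ)..u, C s) (Set.Icc 0 1) :=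
        primitive_continuousOn hC
      have hec : ContinuousOn (fun t => Real.exp (∫ s in (0:ℝ)..t, C s)) (Set.Icc 0 1) :=
        Real.continuous_exp.comp_continuousOn hcIc
      have hΦ₁c : ContinuousOn (fun t => a * Real.exp (∫ s in (0:ℝ)..t, C s) - b * γ₁ t)
          (Set.Icc 0 1) := (continuousOn_const.mul hec).sub (continuousOn_const.mul hγ₁c)
      have hΦ₂c : ContinuousOn (fun t => a * Real.exp (∫ s in (0:ℝ)..t, C s) - b * γ₂ t)
          (Set.Icc 0 1) := (continuousOn_const.mul hec).sub (continuousOn_const.mul hγ₂c)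
      have hw : ∀ t ∈ Set.Icc (0:ℝ) 1, γ₁ t - γ₂ t ≠ 0 := by
        intro t ht hz
        have heqt : γ₁ t = γ₂ t := sub_eq_zero.mp hz
        have hEq := abel_eqOn hA hB hC hγ₁.1 hγ₂.1 ht heqt
        have h1 : γ₁ 1 = γ₂ 1 := hEq ⟨ht.2, le_rfl⟩
        exact h00 (hγ₁.2.trans (h1.trans hγ₂.2.symm))
      set r : ℝ → ℝ := fun t => Real.exp (∫ s in (0:ℝ)..t, C s) ^ 2 * (γ₁ t - γ₂ t) /
        ((a * Real.exp (∫ s in (0:ℝ)..t, C s) - b * γ₁ t) *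
         (a * Real.exp (∫ s in (0:ℝ)..t, C s) - b * γ₂ t)) with hr_def
      have hrc : ContinuousOn r (Set.Icc 0 1) := by
        apply ContinuousOn.div (((hec.pow 2).mul (hγ₁c.sub hγ₂c))) (hΦ₁c.mul hΦ₂c)
        intro t ht
        exact mul_ne_zero (hΦ₁ne t ht) (hΦ₂ne t ht)
      have hrne : ∀ t ∈ Set.Icc (0:ℝ) 1, r t ≠ 0 := by
        intro t ht
        exact div_ne_zero
          (mul_ne_zero (pow_ne_zero 2 (Real.exp_ne_zero _)) (hw t ht))
          (mul_ne_zero (hΦ₁ne t ht) (hΦ₂ne t ht))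
      have hu : Set.uIcc (0:ℝ) 1 = Set.Icc 0 1 := Set.uIcc_of_le zero_le_one
      have hi1 : IntervalIntegrable (fun t => Real.exp (∫ s in (0:ℝ)..t, C s) ^ 2 *
          (A t * γ₁ t + B t) / (a * Real.exp (∫ s in (0:ℝ)..t, C s) - b * γ₁ t)) volume 0 1 :=
        (hu ▸ (((hec.pow 2).mul ((hA.mul hγ₁c).add hB)).div hΦ₁c hΦ₁ne)).intervalIntegrable
      have hi2 : IntervalIntegrable (fun t => Real.exp (∫ s in (0:ℝ)..t, C s) ^ 2 *
          (A t * γ₂ t + B t) / (a * Real.exp (∫ s in (0:ℝ)..t, C s) - b * γ₂ t)) volume 0 1 :=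
        (hu ▸ (((hec.pow 2).mul ((hA.mul hγ₂c).add hB)).div hΦ₂c hΦ₂ne)).intervalIntegrable
      have hint : (∫ t in (0:ℝ)..1,
          (a * A t * Real.exp (∫ s in (0:ℝ)..t, C s) + b * B t) * r t) = 0 := by
        have hcongr : ∀ t ∈ Set.uIcc (0:ℝ) 1,
            (a * A t * Real.exp (∫ s in (0:ℝ)..t, C s) + b * B t) * r t =
            (Real.exp (∫ s in (0:ℝ)..t, C s) ^ 2 * (A t * γ₁ t + B t) /
              (a * Real.exp (∫ s in (0:ℝ)..t, C s) - b * γ₁ t)) -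
            (Real.exp (∫ s in (0:ℝ)..t, C s) ^ 2 * (A t * γ₂ t + B t) /
              (a * Real.exp (∫ s in (0:ℝ)..t, C s) - b * γ₂ t)) := by
          intro t ht
          rw [hu] at ht
          have h1 := hΦ₁ne t ht
          have h2 := hΦ₂ne t ht
          rw [hr_def]
          field_simp
          ring
        rw [intervalIntegral.integral_congr hcongr,
          intervalIntegral.integral_sub hi1 hi2, hI₁, hI₂, sub_zero]
      obtain ⟨t₁, ht₁, hχt₁⟩ := hne
      rcases sign_const hrc hrne with hrpos | hrneg
      · have := integral_pos_of_nonneg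
          (h := fun t => (a * A t * Real.exp (∫ s in (0:ℝ)..t, C s) + b * B t) * r t)
          (((continuousOn_const.mul hA).mul hec).add (continuousOn_const.mul hB) |>.mul hrc)
          (fun t ht => mul_nonneg (hpos t ht) (hrpos t ht).le)
          ⟨t₁, ht₁, mul_ne_zero hχt₁ (hrne t₁ ht₁)⟩
        rw [hint] at this
        exact lt_irrefl 0 this
      · have := integral_pos_of_nonneg
          (h := fun t => -((a * A t * Real.exp (∫ s in (0:ℝ)..t, C s) + b * B t) * r t))
          ((((continuousOn_const.mul hA).mul hec).add (continuousOn_const.mul hB) |>.mul hrc).neg)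
          (fun t ht => neg_nonneg.mpr (mul_nonpos_of_nonneg_of_nonpos (hpos t ht) (hrneg t ht).le))
          ⟨t₁, ht₁, neg_ne_zero.mpr (mul_ne_zero hχt₁ (hrne t₁ ht₁))⟩
        rw [intervalIntegral.integral_neg, hint, neg_zero] at this
        exact lt_irrefl 0 this
  · intro γ hγ h0
    obtain ⟨-, h2, -⟩ := orbit_main A B C
      (fun t => Real.exp (∫ s in (0:ℝ)..t, C s))
      (fun t => a * Real.exp (∫ s in (0:ℝ)..t, C s) - b * γ t)
      (fun t => a * A t * Real.exp (∫ s in (0:ℝ)..t, C s) + b * B t)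
      hA hB hC hC0 a b rfl rfl rfl hpos hne hγ h0
    exact h2


theorem general_abel_uniqueness_zero_mean_C
    (A B C : ℝ → ℝ)
    (hA : ContinuousOn A (Set.Icc 0 1)) (hB : ContinuousOn B (Set.Icc 0 1))
    (hC : ContinuousOn C (Set.Icc 0 1))
    (hC0 : (∫ t in (0:ℝ)..1, C t) = 0)
    (a b : ℝ)
    (h_not_ident_zero : ¬ ∀ t ∈ Set.Icc (0:ℝ) 1,
      a * A t * Real.exp (∫ s in (0:ℝ)..t, C s) + b * B t = 0)
    (h_sign :
      (∀ t ∈ Set.Icc (0:ℝ) 1,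
        0 ≤ a * A t * Real.exp (∫ s in (0:ℝ)..t, C s) + b * B t) ∨
      (∀ t ∈ Set.Icc (0:ℝ) 1,
        a * A t * Real.exp (∫ s in (0:ℝ)..t, C s) + b * B t ≤ 0)) :
    (∀ γ₁ γ₂ : ℝ → ℝ,
      IsGeneralPeriodicOrbit A B C γ₁ → IsGeneralPeriodicOrbit A B C γ₂ →
      γ₁ 0 ≠ 0 → γ₂ 0 ≠ 0 → Set.EqOn γ₁ γ₂ (Set.Icc 0 1)) ∧
    (∀ γ : ℝ → ℝ, IsGeneralPeriodicOrbit A B C γ → γ 0 ≠ 0 →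
      IsGeneralHyperbolic A B C γ) := by
  push_neg at h_not_ident_zero
  rcases h_sign with hs | hs
  · exact master A B C hA hB hC hC0 a b hs h_not_ident_zero
  · apply master A B C hA hB hC hC0 (-a) (-b)
    · intro t ht
      have h1 : (-a) * A t * Real.exp (∫ s in (0:ℝ)..t, C s) + (-b) * B t =
          -(a * A t * Real.exp (∫ s in (0:ℝ)..t, C s) + b * B t) := by ring
      rw [h1]
      linarith [hs t ht]
    · obtain ⟨t₁, ht₁, h₁⟩ := h_not_ident_zero
      refine ⟨t₁, ht₁, ?_⟩
      have h1 : (-a) * A t₁ * Real.exp (∫ s in (0:ℝ)..t₁, C s) + (-b) * B t₁ =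
          -(a * A t₁ * Real.exp (∫ s in (0:ℝ)..t₁, C s) + b * B t₁) := by ring
      rw [h1]
      exact neg_ne_zero.mpr h₁
end

section
/- Let A, B, C : [0,1] → ℝ be continuous. Suppose there exist real numbers a, b and c such that the function t ↦ a·A(t) + b·B(t) is not identically zero on [0,1] and does not change sign on [0,1], and such that (b·C(t) − c·A(t))² + (a·A(t) + b·B(t))·(c·B(t) + a·C(t)) < 0 for all t ∈ [0,1]. Then the Abel equation x' = A(t)x³ + B(t)x² + C(t)x has at most four periodic orbits with nonzero initial condition; that is, the set of initial values γ(0) of periodic orbits γ with γ(0) ≠ 0 has at most four elements. -/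
open Set Filter Topology MeasureTheory intervalIntegral

namespace AbelAux

/-! ### Slope extraction lemmas -/

lemma exists_neg_left {φ : ℝ → ℝ} {d t₁ s : ℝ}
    (hder : HasDerivWithinAt φ d (Icc 0 1) t₁) (hd : 0 < d) (hz : φ t₁ = 0)
    (h0s : 0 ≤ s) (hst : s < t₁) (ht₁ : t₁ ≤ 1) :
    ∃ t, s < t ∧ t < t₁ ∧ φ t < 0 := by
  have hsub : Ioo s t₁ ⊆ Icc (0:ℝ) 1 \ {t₁} := fun x hx =>
    ⟨⟨h0s.trans hx.1.le, hx.2.le.trans ht₁⟩, ne_of_lt hx.2⟩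
  have hslope := hasDerivWithinAt_iff_tendsto_slope.1 hder
  have hev : ∀ᶠ x in 𝓝[Ioo s t₁] t₁, 0 < slope φ t₁ x :=
    (hslope.mono_left (nhdsWithin_mono _ hsub)).eventually (eventually_gt_nhds hd)
  have hne : (𝓝[Ioo s t₁] t₁).NeBot := right_nhdsWithin_Ioo_neBot hst
  obtain ⟨x, hx1, hx2⟩ := (hev.and eventually_mem_nhdsWithin).exists
  refine ⟨x, hx2.1, hx2.2, ?_⟩
  rw [slope_def_field, hz, sub_zero] at hx1
  rcases div_pos_iff.1 hx1 with ⟨_, h'⟩ | ⟨h, _⟩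
  · linarith [hx2.2]
  · exact h

lemma exists_pos_right {φ : ℝ → ℝ} {d t₁ s' : ℝ}
    (hder : HasDerivWithinAt φ d (Icc 0 1) t₁) (hd : 0 < d) (hz : φ t₁ = 0)
    (ht₁0 : 0 ≤ t₁) (hts : t₁ < s') (hs1 : s' ≤ 1) :
    ∃ t, t₁ < t ∧ t < s' ∧ 0 < φ t := by
  have hsub : Ioo t₁ s' ⊆ Icc (0:ℝ) 1 \ {t₁} := fun x hx =>
    ⟨⟨ht₁0.trans hx.1.le, hx.2.le.trans hs1⟩, (ne_of_gt hx.1)⟩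
  have hslope := hasDerivWithinAt_iff_tendsto_slope.1 hder
  have hev : ∀ᶠ x in 𝓝[Ioo t₁ s'] t₁, 0 < slope φ t₁ x :=
    (hslope.mono_left (nhdsWithin_mono _ hsub)).eventually (eventually_gt_nhds hd)
  have hne : (𝓝[Ioo t₁ s'] t₁).NeBot := left_nhdsWithin_Ioo_neBot hts
  obtain ⟨x, hx1, hx2⟩ := (hev.and eventually_mem_nhdsWithin).exists
  refine ⟨x, hx2.1, hx2.2, ?_⟩
  rw [slope_def_field, hz, sub_zero] at hx1
  rcases div_pos_iff.1 hx1 with ⟨h, _⟩ | ⟨_, h'⟩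
  · exact h
  · linarith [hx2.1]

/-! ### The upcrossing lemma : a `[0,1]`-periodic function whose derivative is strictly
positive at each of its zeros has no zeros. -/

lemma upcross {φ d : ℝ → ℝ}
    (hc : ContinuousOn φ (Icc 0 1))
    (hder : ∀ t ∈ Icc (0:ℝ) 1, φ t = 0 →
      HasDerivWithinAt φ (d t) (Icc 0 1) t ∧ 0 < d t)
    (hper : φ 0 = φ 1) :
    ∀ t ∈ Icc (0:ℝ) 1, φ t ≠ 0 := by
  -- core: positive at s, nonpositive at s' with s < s' : impossible
  have core : ∀ s s' : ℝ, s ∈ Icc (0:ℝ) 1 → s' ∈ Icc (0:ℝ) 1 → s < s' →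
      0 < φ s → φ s' ≤ 0 → False := by
    intro s s' hs hs' hss hφs hφs'
    have hIccsub : Icc s s' ⊆ Icc (0:ℝ) 1 := Icc_subset_Icc hs.1 hs'.2
    have hcz : ContinuousOn φ (Icc s s') := hc.mono hIccsub
    set Z : Set ℝ := Icc s s' ∩ φ ⁻¹' {0} with hZdef
    have hZc : IsClosed Z := hcz.preimage_isClosed_of_isClosed isClosed_Icc isClosed_singleton
    have hZcpt : IsCompact Z := isCompact_Icc.of_isClosed_subset hZc inter_subset_left
    have hne : Z.Nonempty := by
      obtain ⟨t, htm, htz⟩ := intermediate_value_Icc' hss.le hcz ⟨hφs', hφs.le⟩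
      exact ⟨t, htm, htz⟩
    set t₁ := sInf Z with ht₁def
    have ht₁Z : t₁ ∈ Z := hZcpt.sInf_mem hne
    have ht₁zero : φ t₁ = 0 := ht₁Z.2
    have hst₁ : s < t₁ := by
      rcases lt_or_eq_of_le ht₁Z.1.1 with h | h
      · exact h
      · exfalso; rw [← h] at ht₁zero; linarith
    have ht₁Icc : t₁ ∈ Icc (0:ℝ) 1 := hIccsub ht₁Z.1
    have hpos : ∀ x ∈ Ioo s t₁, 0 < φ x := by
      intro x hx
      have hxI : x ∈ Icc s s' := ⟨hx.1.le, hx.2.le.trans ht₁Z.1.2⟩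
      have hxnz : φ x ≠ 0 := by
        intro h
        exact absurd (csInf_le hZcpt.bddBelow ⟨hxI, h⟩) (not_le.2 hx.2)
      rcases hxnz.lt_or_gt with h | h
      · exfalso
        obtain ⟨z, hzm, hzz⟩ := intermediate_value_Icc' hx.1.le
          (hcz.mono (Icc_subset_Icc le_rfl hxI.2)) ⟨h.le, hφs.le⟩
        have : t₁ ≤ z := csInf_le hZcpt.bddBelow ⟨⟨hzm.1, hzm.2.trans hxI.2⟩, hzz⟩
        linarith [hzm.2, hx.2]
      · exact h
    obtain ⟨hd1, hd2⟩ := hder t₁ ht₁Icc ht₁zero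
    obtain ⟨x, hsx, hxt₁, hφx⟩ := exists_neg_left hd1 hd2 ht₁zero hs.1 hst₁ ht₁Icc.2
    exact absurd (hpos x ⟨hsx, hxt₁⟩) (not_lt.2 hφx.le)
  have core2 : ∀ s s' : ℝ, s ∈ Icc (0:ℝ) 1 → s' ∈ Icc (0:ℝ) 1 → s < s' →
      0 ≤ φ s → φ s' < 0 → False := by
    intro s s' hs hs' hss hφs hφs'
    have hIccsub : Icc s s' ⊆ Icc (0:ℝ) 1 := Icc_subset_Icc hs.1 hs'.2
    have hcz : ContinuousOn φ (Icc s s') := hc.mono hIccsub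
    set Z : Set ℝ := Icc s s' ∩ φ ⁻¹' {0} with hZdef
    have hZc : IsClosed Z := hcz.preimage_isClosed_of_isClosed isClosed_Icc isClosed_singleton
    have hZcpt : IsCompact Z := isCompact_Icc.of_isClosed_subset hZc inter_subset_left
    have hne : Z.Nonempty := by
      obtain ⟨t, htm, htz⟩ := intermediate_value_Icc' hss.le hcz ⟨hφs'.le, hφs⟩
      exact ⟨t, htm, htz⟩
    set t₂ := sSup Z with ht₂def
    have ht₂Z : t₂ ∈ Z := hZcpt.sSup_mem hne
    have ht₂zero : φ t₂ = 0 := ht₂Z.2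
    have ht₂s' : t₂ < s' := by
      rcases lt_or_eq_of_le ht₂Z.1.2 with h | h
      · exact h
      · exfalso; rw [h] at ht₂zero; linarith
    have ht₂Icc : t₂ ∈ Icc (0:ℝ) 1 := hIccsub ht₂Z.1
    have hneg : ∀ x ∈ Ioo t₂ s', φ x < 0 := by
      intro x hx
      have hxI : x ∈ Icc s s' := ⟨ht₂Z.1.1.trans hx.1.le, hx.2.le⟩
      have hxnz : φ x ≠ 0 := by
        intro h
        exact absurd (le_csSup hZcpt.bddAbove ⟨hxI, h⟩) (not_le.2 hx.1)
      rcases hxnz.lt_or_gt with h | h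
      · exact h
      · exfalso
        obtain ⟨z, hzm, hzz⟩ := intermediate_value_Icc' hx.2.le
          (hcz.mono (Icc_subset_Icc hxI.1 le_rfl)) ⟨hφs'.le, h.le⟩
        have : z ≤ t₂ := le_csSup hZcpt.bddAbove ⟨⟨hxI.1.trans hzm.1, hzm.2⟩, hzz⟩
        linarith [hzm.1, hx.1]
    obtain ⟨hd1, hd2⟩ := hder t₂ ht₂Icc ht₂zero
    obtain ⟨x, hsx, hxt, hφx⟩ := exists_pos_right hd1 hd2 ht₂zero ht₂Icc.1 ht₂s' hs'.2
    exact absurd (hneg x ⟨hsx, hxt⟩) (not_lt.2 hφx.le)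
  intro t₀ ht₀ hzero
  have h0Icc : (0:ℝ) ∈ Icc (0:ℝ) 1 := ⟨le_rfl, zero_le_one⟩
  have h1Icc : (1:ℝ) ∈ Icc (0:ℝ) 1 := ⟨zero_le_one, le_rfl⟩
  rcases lt_trichotomy (φ 0) 0 with h | h | h
  · -- φ 0 < 0 : use core2 on [t₀, 1]
    have hφ1 : φ 1 < 0 := hper ▸ h
    have ht₀1 : t₀ < 1 := by
      rcases lt_or_eq_of_le ht₀.2 with h' | h'
      · exact h'
      · exfalso; rw [h'] at hzero; linarith
    exact core2 t₀ 1 ht₀ h1Icc ht₀1 hzero.ge hφ1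
  · -- φ 0 = 0
    have hφ1 : φ 1 = 0 := hper ▸ h
    obtain ⟨hda, hdb⟩ := hder 0 h0Icc h
    obtain ⟨sa, h0sa, hsa1, hφsa⟩ := exists_pos_right hda hdb h le_rfl zero_lt_one le_rfl
    obtain ⟨hdc, hdd⟩ := hder 1 h1Icc hφ1
    obtain ⟨sb, hsasb, hsb1, hφsb⟩ := exists_neg_left hdc hdd hφ1 h0sa.le hsa1 le_rfl
    exact core sa sb ⟨h0sa.le, hsa1.le⟩ ⟨h0sa.le.trans hsasb.le, hsb1.le⟩ hsasb hφsa hφsb.le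
  · -- φ 0 > 0 : use core on [0, t₀]
    have ht₀0 : 0 < t₀ := by
      rcases lt_or_eq_of_le ht₀.1 with h' | h'
      · exact h'
      · exfalso; rw [← h'] at hzero; linarith
    exact core 0 t₀ h0Icc ht₀ ht₀0 h hzero.le

/-! ### Orbits never vanish -/

lemma orbit_cont {A B C γ : ℝ → ℝ} (hγ : IsGeneralAbelSolution A B C γ) :
    ContinuousOn γ (Icc 0 1) := fun t ht => (hγ t ht).continuousWithinAt

lemma orbit_ne_zero {A B C γ : ℝ → ℝ}
    (hA : ContinuousOn A (Icc 0 1)) (hB : ContinuousOn B (Icc 0 1))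
    (hC : ContinuousOn C (Icc 0 1))
    (hγ : IsGeneralAbelSolution A B C γ) (h0 : γ 0 ≠ 0) :
    ∀ t ∈ Icc (0:ℝ) 1, γ t ≠ 0 := by
  have hγc : ContinuousOn γ (Icc 0 1) := orbit_cont hγ
  set w₀ : ℝ → ℝ := fun t => A t * γ t ^ 2 + B t * γ t + C t with hw₀def
  have hw₀ : ContinuousOn w₀ (Icc 0 1) :=
    ((hA.mul (hγc.pow 2)).add (hB.mul hγc)).add hC
  set cl : ℝ → ℝ := fun t => min (max t 0) 1 with hcldef
  have hclc : Continuous cl := (continuous_id.max continuous_const).min continuous_const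
  have hclmem : ∀ t, cl t ∈ Icc (0:ℝ) 1 := fun t =>
    ⟨le_min (le_max_right t 0) zero_le_one, min_le_right _ _⟩
  have hclid : ∀ t ∈ Icc (0:ℝ) 1, cl t = t := fun t ht => by
    simp only [hcldef]; rw [max_eq_left ht.1, min_eq_left ht.2]
  set w : ℝ → ℝ := fun t => w₀ (cl t) with hwdef
  have hw : Continuous w := hw₀.comp_continuous hclc hclmem
  have hwid : ∀ t ∈ Icc (0:ℝ) 1, w t = w₀ t := fun t ht => by
    simp only [hwdef]; rw [hclid t ht]
  set I : ℝ → ℝ := fun x => ∫ y in (0:ℝ)..x, w y with hIdef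
  have hI : ∀ x : ℝ, HasDerivAt I (w x) x := fun x =>
    integral_hasDerivAt_right (hw.intervalIntegrable _ _)
      ⟨Set.univ, Filter.univ_mem, hw.measurable.stronglyMeasurable.aestronglyMeasurable.restrict⟩
      hw.continuousAt
  have hIc : Continuous I := by
    refine continuous_iff_continuousAt.2 fun x => (hI x).continuousAt
  set ζ : ℝ → ℝ := fun t => γ t * Real.exp (-I t) with hζdef
  have hζd : ∀ t ∈ Icc (0:ℝ) 1, HasDerivWithinAt ζ 0 (Icc 0 1) t := by
    intro t ht
    have h2 : HasDerivWithinAt (fun t => Real.exp (-I t)) (Real.exp (-I t) * (-w t))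
        (Icc 0 1) t := ((hI t).hasDerivWithinAt.neg).exp
    have h3 := (hγ t ht).mul h2
    refine h3.congr_deriv ?_
    rw [hwid t ht]
    simp only [hw₀def]
    ring
  have hζc : ContinuousOn ζ (Icc 0 1) := hγc.mul ((hIc.neg.rexp).continuousOn)
  have hconst : ∀ t ∈ Icc (0:ℝ) 1, ζ t = ζ 0 := by
    refine constant_of_has_deriv_right_zero hζc fun x hx => ?_
    have hmem : Icc (0:ℝ) 1 ∈ 𝓝[Ici x] x := by
      have h1 : Icc x 1 ∈ 𝓝[Ici x] x := by
        rw [← nhdsWithin_Icc_eq_nhdsGE hx.2]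
        exact self_mem_nhdsWithin
      exact mem_of_superset h1 (Icc_subset_Icc hx.1 le_rfl)
    exact (hζd x ⟨hx.1, hx.2.le⟩).mono_of_mem_nhdsWithin hmem
  intro t ht hzt
  have h1 : ζ t = ζ 0 := hconst t ht
  have h2 : ζ 0 = γ 0 * Real.exp (-I 0) := rfl
  have h3 : Real.exp (-I 0) ≠ 0 := Real.exp_ne_zero _
  have h4 : ζ t = 0 := by simp [hζdef, hzt]
  rw [h4] at h1
  have := h1.symm
  rw [h2] at this
  exact h0 (by
    rcases mul_eq_zero.1 this with h | h
    · exact h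
    · exact absurd h h3)

/-! ### Orbits never cross the roots of `Ṽ(x) = b x² - a x + c` -/

lemma orbit_ne_root {A B C γ : ℝ → ℝ} {a b c : ℝ}
    (hA : ContinuousOn A (Icc 0 1)) (hB : ContinuousOn B (Icc 0 1))
    (hC : ContinuousOn C (Icc 0 1))
    (hR : ∀ t ∈ Icc (0:ℝ) 1, ∀ x : ℝ,
      0 < (a * A t + b * B t) * x ^ 2 + 2 * (b * C t - c * A t) * x - (c * B t + a * C t))
    (hγ : IsGeneralAbelSolution A B C γ) (hper : γ 0 = γ 1) (h0 : γ 0 ≠ 0)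
    (r : ℝ) (hr : b * r ^ 2 - a * r + c = 0) :
    ∀ t ∈ Icc (0:ℝ) 1, γ t ≠ r := by
  by_cases hr0 : r = 0
  · intro t ht
    rw [hr0]
    exact orbit_ne_zero hA hB hC hγ h0 t ht
  -- key : (A r² + B r + C) * (2 b r - a) = R t r > 0
  have key : ∀ t ∈ Icc (0:ℝ) 1,
      0 < (A t * r ^ 2 + B t * r + C t) * (2 * b * r - a) := by
    intro t ht
    have h1 := hR t ht r
    have h2 : (A t * r ^ 2 + B t * r + C t) * (2 * b * r - a)
        = (a * A t + b * B t) * r ^ 2 + 2 * (b * C t - c * A t) * r - (c * B t + a * C t) := by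
      linear_combination (2 * A t * r + B t) * hr
    rw [h2]; exact h1
  have h2bra : 2 * b * r - a ≠ 0 := by
    intro h
    have := key 0 ⟨le_rfl, zero_le_one⟩
    rw [h, mul_zero] at this
    exact lt_irrefl 0 this
  have hγc := orbit_cont hγ
  rcases (mul_ne_zero hr0 h2bra).lt_or_gt with he | he
  · -- r * (2 b r - a) < 0 : then r * W̄ < 0, use upcross on φ = r - γ
    have hWneg : ∀ s ∈ Icc (0:ℝ) 1, r * (A s * r ^ 2 + B s * r + C s) < 0 := by
      intro s hs
      nlinarith [mul_neg_of_neg_of_pos he (key s hs), sq_nonneg (2 * b * r - a)]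
    have hder : ∀ s ∈ Icc (0:ℝ) 1, r - γ s = 0 →
        HasDerivWithinAt (fun u => r - γ u)
          (-(A s * r ^ 3 + B s * r ^ 2 + C s * r)) (Icc 0 1) s ∧
        0 < -(A s * r ^ 3 + B s * r ^ 2 + C s * r) := by
      intro s hs hz
      have hgs : γ s = r := (sub_eq_zero.1 hz).symm
      have hder1 : HasDerivWithinAt (fun u => r - γ u)
          (-(A s * γ s ^ 3 + B s * γ s ^ 2 + C s * γ s)) (Icc 0 1) s :=
        (hγ s hs).const_sub r
      rw [hgs] at hder1
      refine ⟨hder1, ?_⟩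
      have h1 := hWneg s hs
      have h2 : A s * r ^ 3 + B s * r ^ 2 + C s * r
          = r * (A s * r ^ 2 + B s * r + C s) := by ring
      linarith [h2 ▸ h1]
    have hno := AbelAux.upcross (φ := fun u => r - γ u) (continuousOn_const.sub hγc) hder (by rw [hper])
    intro t ht hgr
    exact hno t ht (by rw [hgr, sub_self])
  · -- r * (2 b r - a) > 0 : then r * W̄ > 0, use upcross on φ = γ - r
    have hWpos : ∀ s ∈ Icc (0:ℝ) 1, 0 < r * (A s * r ^ 2 + B s * r + C s) := by
      intro s hs
      nlinarith [mul_pos he (key s hs), sq_nonneg (2 * b * r - a)]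
    have hder : ∀ s ∈ Icc (0:ℝ) 1, γ s - r = 0 →
        HasDerivWithinAt (fun u => γ u - r)
          (A s * r ^ 3 + B s * r ^ 2 + C s * r) (Icc 0 1) s ∧
        0 < A s * r ^ 3 + B s * r ^ 2 + C s * r := by
      intro s hs hz
      have hgs : γ s = r := sub_eq_zero.1 hz
      have hder1 : HasDerivWithinAt (fun u => γ u - r)
          (A s * γ s ^ 3 + B s * γ s ^ 2 + C s * γ s) (Icc 0 1) s :=
        (hγ s hs).sub_const r
      rw [hgs] at hder1
      refine ⟨hder1, ?_⟩
      have h1 := hWpos s hs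
      have h2 : A s * r ^ 3 + B s * r ^ 2 + C s * r
          = r * (A s * r ^ 2 + B s * r + C s) := by ring
      linarith [h2 ▸ h1]
    have hno := AbelAux.upcross (φ := fun u => γ u - r) (hγc.sub continuousOn_const) hder (by rw [hper])
    intro t ht hgr
    exact hno t ht (by rw [hgr, sub_self])

/-! ### Sign constancy of a continuous function avoiding a value -/

lemma sign_const {γ : ℝ → ℝ} {τ : ℝ} (hc : ContinuousOn γ (Icc 0 1))
    (hne : ∀ t ∈ Icc (0:ℝ) 1, γ t ≠ τ) :
    (∀ t ∈ Icc (0:ℝ) 1, γ t < τ) ∨ (∀ t ∈ Icc (0:ℝ) 1, τ < γ t) := by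
  have h0 : (0:ℝ) ∈ Icc (0:ℝ) 1 := ⟨le_rfl, zero_le_one⟩
  rcases (hne 0 h0).lt_or_gt with h | h
  · left
    intro t ht
    rcases (hne t ht).lt_or_gt with h' | h'
    · exact h'
    · exfalso
      have hsub : uIcc (0:ℝ) t ⊆ Icc (0:ℝ) 1 := by
        rw [uIcc_of_le ht.1]
        exact Icc_subset_Icc le_rfl ht.2
      obtain ⟨z, hz, hz'⟩ := intermediate_value_uIcc (hc.mono hsub)
        (show τ ∈ uIcc (γ 0) (γ t) from by rw [mem_uIcc]; left; exact ⟨h.le, h'.le⟩)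
      exact hne z (hsub hz) hz'
  · right
    intro t ht
    rcases (hne t ht).lt_or_gt with h' | h'
    · exfalso
      have hsub : uIcc (0:ℝ) t ⊆ Icc (0:ℝ) 1 := by
        rw [uIcc_of_le ht.1]
        exact Icc_subset_Icc le_rfl ht.2
      obtain ⟨z, hz, hz'⟩ := intermediate_value_uIcc (hc.mono hsub)
        (show τ ∈ uIcc (γ 0) (γ t) from by rw [mem_uIcc]; right; exact ⟨h'.le, h.le⟩)
      exact hne z (hsub hz) hz'
    · exact h'

/-! ### The tail argument: a periodic function whose square is monotone is constant -/

lemma tail {u e : ℝ → ℝ}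
    (hu : ∀ t ∈ Icc (0:ℝ) 1, HasDerivWithinAt u (e t) (Icc 0 1) t)
    (hsign : ∀ t ∈ Ioo (0:ℝ) 1, u t * e t ≤ 0)
    (hperu : u 0 = u 1) (hu0 : u 0 ≠ 0) :
    u (1/2 : ℝ) ≠ 0 ∧ e (1/2 : ℝ) = 0 := by
  have huc : ContinuousOn u (Icc 0 1) := fun t ht => (hu t ht).continuousWithinAt
  set v : ℝ → ℝ := fun t => u t ^ 2 with hvdef
  have hvd : ∀ t ∈ Ioo (0:ℝ) 1, HasDerivAt v (2 * u t * e t) t := by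
    intro t ht
    have h1 : HasDerivAt u (e t) t :=
      (hu t ⟨ht.1.le, ht.2.le⟩).hasDerivAt (Icc_mem_nhds ht.1 ht.2)
    exact (h1.pow 2).congr_deriv (by norm_num)
  have hanti : AntitoneOn v (Icc 0 1) := by
    refine antitoneOn_of_deriv_nonpos (convex_Icc 0 1) (huc.pow 2) ?_ ?_
    · intro t ht
      rw [interior_Icc] at ht
      exact (hvd t ht).differentiableAt.differentiableWithinAt
    · intro t ht
      rw [interior_Icc] at ht
      rw [(hvd t ht).deriv]
      have := hsign t ht
      linarith
  have hv01 : v 1 = v 0 := by simp only [hvdef]; rw [hperu]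
  have hconst : ∀ t ∈ Icc (0:ℝ) 1, v t = v 0 := by
    intro t ht
    have h1 : v t ≤ v 0 := hanti ⟨le_rfl, zero_le_one⟩ ht ht.1
    have h2 : v 1 ≤ v t := hanti ht ⟨zero_le_one, le_rfl⟩ ht.2
    rw [hv01] at h2
    linarith
  have hhm' : (0:ℝ) < 1/2 := by norm_num
  have hhm'' : (1/2:ℝ) < 1 := by norm_num
  have hvh : v (1/2) = v 0 := hconst _ ⟨hhm'.le, hhm''.le⟩
  have huh : u (1/2 : ℝ) ≠ 0 := by
    intro h
    have hvz : v (1/2 : ℝ) = 0 := by simp only [hvdef]; rw [h]; norm_num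
    rw [hvh] at hvz
    exact hu0 ((pow_eq_zero_iff two_ne_zero).1 hvz)
  have hd0 : HasDerivAt v 0 (1/2) := by
    refine (hasDerivAt_const _ (v 0)).congr_of_eventuallyEq ?_
    filter_upwards [Icc_mem_nhds hhm' hhm''] with s hs
    exact hconst s hs
  have hd1 : HasDerivAt v (2 * u (1/2) * e (1/2)) (1/2) := hvd _ ⟨hhm', hhm''⟩
  have huni := hd1.unique hd0
  refine ⟨huh, ?_⟩
  rcases mul_eq_zero.1 huni with h | h
  · rcases mul_eq_zero.1 h with h' | h'
    · norm_num at h'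
    · exact absurd h' huh
  · exact h

/-! ### The separation lemma: between the initial values of two distinct periodic
orbits there is a root of `x (b x² - a x + c)` -/

lemma sep {A B C γ₁ γ₂ : ℝ → ℝ} {a b c : ℝ}
    (hA : ContinuousOn A (Icc 0 1)) (hB : ContinuousOn B (Icc 0 1))
    (hC : ContinuousOn C (Icc 0 1))
    (hR : ∀ t ∈ Icc (0:ℝ) 1, ∀ x : ℝ,
      0 < (a * A t + b * B t) * x ^ 2 + 2 * (b * C t - c * A t) * x - (c * B t + a * C t))
    (h₁ : IsGeneralAbelSolution A B C γ₁) (hper₁ : γ₁ 0 = γ₁ 1) (h0₁ : γ₁ 0 ≠ 0)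
    (h₂ : IsGeneralAbelSolution A B C γ₂) (hper₂ : γ₂ 0 = γ₂ 1) (h0₂ : γ₂ 0 ≠ 0)
    (hlt : γ₁ 0 < γ₂ 0) :
    ∃ τ, τ * (b * τ ^ 2 - a * τ + c) = 0 ∧ γ₁ 0 < τ ∧ τ < γ₂ 0 := by
  by_contra hsep
  push_neg at hsep
  have h0Icc : (0:ℝ) ∈ Icc (0:ℝ) 1 := ⟨le_rfl, zero_le_one⟩
  have hγc₁ := orbit_cont h₁
  have hγc₂ := orbit_cont h₂
  have hnz₁ := orbit_ne_zero hA hB hC h₁ h0₁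
  have hnz₂ := orbit_ne_zero hA hB hC h₂ h0₂
  have hroot₁ : ∀ t ∈ Icc (0:ℝ) 1, γ₁ t * (b * γ₁ t ^ 2 - a * γ₁ t + c) ≠ 0 := by
    intro t ht h
    rcases mul_eq_zero.1 h with h' | h'
    · exact hnz₁ t ht h'
    · exact orbit_ne_root hA hB hC hR h₁ hper₁ h0₁ (γ₁ t) h' t ht rfl
  have hroot₂ : ∀ t ∈ Icc (0:ℝ) 1, γ₂ t * (b * γ₂ t ^ 2 - a * γ₂ t + c) ≠ 0 := by
    intro t ht h
    rcases mul_eq_zero.1 h with h' | h'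
    · exact hnz₂ t ht h'
    · exact orbit_ne_root hA hB hC hR h₂ hper₂ h0₂ (γ₂ t) h' t ht rfl
  set S : Set ℝ := γ₁ '' Icc 0 1 ∪ γ₂ '' Icc 0 1 with hSdef
  have hScpt : IsCompact S := (isCompact_Icc.image_of_continuousOn hγc₁).union
    (isCompact_Icc.image_of_continuousOn hγc₂)
  have hSne : S.Nonempty := ⟨γ₁ 0, Or.inl ⟨0, h0Icc, rfl⟩⟩
  set m := sInf S with hmdef
  set M := sSup S with hMdef
  have hmS : m ∈ S := hScpt.sInf_mem hSne
  have hMS : M ∈ S := hScpt.sSup_mem hSne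
  have hmle : ∀ y ∈ S, m ≤ y := fun y hy => csInf_le hScpt.bddBelow hy
  have hleM : ∀ y ∈ S, y ≤ M := fun y hy => le_csSup hScpt.bddAbove hy
  have hmem₁ : ∀ t ∈ Icc (0:ℝ) 1, γ₁ t ∈ Icc m M := fun t ht =>
    ⟨hmle _ (Or.inl ⟨t, ht, rfl⟩), hleM _ (Or.inl ⟨t, ht, rfl⟩)⟩
  have hmem₂ : ∀ t ∈ Icc (0:ℝ) 1, γ₂ t ∈ Icc m M := fun t ht =>
    ⟨hmle _ (Or.inr ⟨t, ht, rfl⟩), hleM _ (Or.inr ⟨t, ht, rfl⟩)⟩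
  -- p(x) = x Ṽ(x) never vanishes on [m, M]
  have hp : ∀ x ∈ Icc m M, x * (b * x ^ 2 - a * x + c) ≠ 0 := by
    intro x hx hx0
    have hne₁ : ∀ t ∈ Icc (0:ℝ) 1, γ₁ t ≠ x := by
      intro t ht h
      exact hroot₁ t ht (by rw [h]; exact hx0)
    have hne₂ : ∀ t ∈ Icc (0:ℝ) 1, γ₂ t ≠ x := by
      intro t ht h
      exact hroot₂ t ht (by rw [h]; exact hx0)
    rcases sign_const hγc₁ hne₁ with hs₁ | hs₁ <;> rcases sign_const hγc₂ hne₂ with hs₂ | hs₂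
    · rcases hMS with ⟨t, ht, hMe⟩ | ⟨t, ht, hMe⟩
      · have := hs₁ t ht; rw [hMe] at this; linarith [hx.2]
      · have := hs₂ t ht; rw [hMe] at this; linarith [hx.2]
    · exact absurd (hsep x hx0 (hs₁ 0 h0Icc)) (not_le.2 (hs₂ 0 h0Icc))
    · have h1 := hs₁ 0 h0Icc
      have h2 := hs₂ 0 h0Icc
      linarith
    · rcases hmS with ⟨t, ht, hme⟩ | ⟨t, ht, hme⟩
      · have := hs₁ t ht; rw [hme] at this; linarith [hx.1]
      · have := hs₂ t ht; rw [hme] at this; linarith [hx.1]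
  -- the primitive H of 1/(x Ṽ(x))
  set q : ℝ → ℝ := fun y => (y * (b * y ^ 2 - a * y + c))⁻¹ with hqdef
  have hqm : Measurable q := by fun_prop
  have hqc : ∀ x ∈ Icc m M, ContinuousAt q x := by
    intro x hx
    have : ContinuousAt (fun y : ℝ => y * (b * y ^ 2 - a * y + c)) x := by fun_prop
    exact this.inv₀ (hp x hx)
  have hqcon : ContinuousOn q (Icc m M) := fun x hx => (hqc x hx).continuousWithinAt
  set H : ℝ → ℝ := fun x => ∫ y in m..x, q y with hHdef
  have hHd : ∀ x ∈ Icc m M, HasDerivAt H (q x) x := by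
    intro x hx
    refine integral_hasDerivAt_right ?_ ⟨Set.univ, Filter.univ_mem,
      hqm.stronglyMeasurable.aestronglyMeasurable.restrict⟩ (hqc x hx)
    apply ContinuousOn.intervalIntegrable
    apply hqcon.mono
    rw [uIcc_of_le hx.1]
    exact Icc_subset_Icc le_rfl hx.2
  have hHc : ContinuousOn H (Icc m M) := fun x hx => (hHd x hx).continuousAt.continuousWithinAt
  -- F t = W(t, ·)/Ṽ is strictly decreasing on [m, M]
  set F : ℝ → ℝ → ℝ := fun t x => (A t * x ^ 2 + B t * x + C t) / (b * x ^ 2 - a * x + c)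
    with hFdef
  have hVne : ∀ x ∈ Icc m M, b * x ^ 2 - a * x + c ≠ 0 := fun x hx h =>
    hp x hx (by rw [h, mul_zero])
  have hFanti : ∀ t ∈ Icc (0:ℝ) 1, StrictAntiOn (F t) (Icc m M) := by
    intro t ht
    refine strictAntiOn_of_deriv_neg (convex_Icc m M) ?_ ?_
    · refine ContinuousOn.div (by fun_prop) (by fun_prop) hVne
    · intro x hx
      rw [interior_Icc] at hx
      have hxm : x ∈ Icc m M := ⟨hx.1.le, hx.2.le⟩
      have hW : HasDerivAt (fun y : ℝ => A t * y ^ 2 + B t * y + C t) (2 * A t * x + B t) x := by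
        have h1 : HasDerivAt (fun y : ℝ => A t * y ^ 2) (A t * (2 * x)) x := by
          simpa using (hasDerivAt_pow 2 x).const_mul (A t)
        have h2 : HasDerivAt (fun y : ℝ => B t * y) (B t * 1) x :=
          (hasDerivAt_id x).const_mul (B t)
        have h3 := (h1.add h2).add_const (C t)
        exact h3.congr_deriv (by ring)
      have hV : HasDerivAt (fun y : ℝ => b * y ^ 2 - a * y + c) (2 * b * x - a) x := by
        have h1 : HasDerivAt (fun y : ℝ => b * y ^ 2) (b * (2 * x)) x := by
          simpa using (hasDerivAt_pow 2 x).const_mul b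
        have h2 : HasDerivAt (fun y : ℝ => a * y) (a * 1) x :=
          (hasDerivAt_id x).const_mul a
        have h3 := (h1.sub h2).add_const c
        exact h3.congr_deriv (by ring)
      have hFd := hW.div hV (hVne x hxm)
      have hFdd : deriv (F t) x = ((2 * A t * x + B t) * (b * x ^ 2 - a * x + c)
          - (A t * x ^ 2 + B t * x + C t) * (2 * b * x - a)) / (b * x ^ 2 - a * x + c) ^ 2 := by
        rw [hFdef]
        exact hFd.deriv
      rw [hFdd]
      apply div_neg_of_neg_of_pos
      · have h1 := hR t ht x
        have h2 : (2 * A t * x + B t) * (b * x ^ 2 - a * x + c)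
            - (A t * x ^ 2 + B t * x + C t) * (2 * b * x - a)
            = -((a * A t + b * B t) * x ^ 2 + 2 * (b * C t - c * A t) * x
              - (c * B t + a * C t)) := by ring
        rw [h2]
        linarith
      · exact lt_of_le_of_ne (sq_nonneg _) (Ne.symm (pow_ne_zero 2 (hVne x hxm)))
  -- u = H∘γ₁ - H∘γ₂ and its derivative e
  set u : ℝ → ℝ := fun t => H (γ₁ t) - H (γ₂ t) with hudef
  set e : ℝ → ℝ := fun t => F t (γ₁ t) - F t (γ₂ t) with hedef
  have hqF : ∀ t : ℝ, ∀ x ∈ Icc m M,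
      q x * (A t * x ^ 3 + B t * x ^ 2 + C t * x) = F t x := by
    intro t x hx
    have h1 := hp x hx
    have h2 : x ≠ 0 := fun h => h1 (by rw [h, zero_mul])
    have h3 := hVne x hx
    rw [hqdef, hFdef]
    field_simp
  have hud : ∀ t ∈ Icc (0:ℝ) 1, HasDerivWithinAt u (e t) (Icc 0 1) t := by
    intro t ht
    have hd1 : HasDerivWithinAt (fun s => H (γ₁ s))
        (q (γ₁ t) * (A t * γ₁ t ^ 3 + B t * γ₁ t ^ 2 + C t * γ₁ t)) (Icc 0 1) t :=
      (hHd (γ₁ t) (hmem₁ t ht)).comp_hasDerivWithinAt t (h₁ t ht)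
    have hd2 : HasDerivWithinAt (fun s => H (γ₂ s))
        (q (γ₂ t) * (A t * γ₂ t ^ 3 + B t * γ₂ t ^ 2 + C t * γ₂ t)) (Icc 0 1) t :=
      (hHd (γ₂ t) (hmem₂ t ht)).comp_hasDerivWithinAt t (h₂ t ht)
    have hval := hd1.sub hd2
    rw [hqF t (γ₁ t) (hmem₁ t ht), hqF t (γ₂ t) (hmem₂ t ht)] at hval
    exact hval
  -- sign of p on [m, M]
  have hσ : (∀ x ∈ Icc m M, 0 < x * (b * x ^ 2 - a * x + c)) ∨
      (∀ x ∈ Icc m M, x * (b * x ^ 2 - a * x + c) < 0) := by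
    by_cases h1 : ∀ x ∈ Icc m M, 0 < x * (b * x ^ 2 - a * x + c)
    · exact Or.inl h1
    · right
      push_neg at h1
      obtain ⟨x₀, hx₀, hx₀'⟩ := h1
      have hx₀n : x₀ * (b * x₀ ^ 2 - a * x₀ + c) < 0 := lt_of_le_of_ne hx₀' (hp x₀ hx₀)
      intro y hy
      rcases (hp y hy).lt_or_gt with h | h
      · exact h
      · exfalso
        have hsub : uIcc x₀ y ⊆ Icc m M := uIcc_subset_Icc hx₀ hy
        obtain ⟨z, hz, hz'⟩ := intermediate_value_uIcc
          (Continuous.continuousOn (by fun_prop : Continuous fun x : ℝ =>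
            x * (b * x ^ 2 - a * x + c)))
          (show (0:ℝ) ∈ uIcc (x₀ * (b * x₀ ^ 2 - a * x₀ + c)) (y * (b * y ^ 2 - a * y + c))
            from by rw [mem_uIcc]; left; exact ⟨hx₀n.le, h.le⟩)
        exact hp z (hsub hz) hz'
  have hmρ₁ : γ₁ 0 ∈ Icc m M := hmem₁ 0 h0Icc
  have hmρ₂ : γ₂ 0 ∈ Icc m M := hmem₂ 0 h0Icc
  have hperu : u 0 = u 1 := by simp only [hudef]; rw [hper₁, hper₂]
  have hhalf : u (1/2 : ℝ) ≠ 0 ∧ e (1/2 : ℝ) = 0 := by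
    rcases hσ with hσp | hσn
    · -- H strictly increasing
      have hmono : StrictMonoOn H (Icc m M) := by
        refine strictMonoOn_of_deriv_pos (convex_Icc m M) hHc ?_
        intro x hx
        rw [interior_Icc] at hx
        have hxm : x ∈ Icc m M := ⟨hx.1.le, hx.2.le⟩
        rw [(hHd x hxm).deriv]
        exact inv_pos.2 (hσp x hxm)
      have hu0 : u 0 ≠ 0 := sub_ne_zero.2 (ne_of_lt (hmono hmρ₁ hmρ₂ hlt))
      have hsign : ∀ t ∈ Ioo (0:ℝ) 1, u t * e t ≤ 0 := by
        intro t ht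
        have htI : t ∈ Icc (0:ℝ) 1 := ⟨ht.1.le, ht.2.le⟩
        rcases lt_trichotomy (γ₁ t) (γ₂ t) with h | h | h
        · have hu' : u t < 0 := sub_neg.2 (hmono (hmem₁ t htI) (hmem₂ t htI) h)
          have he' : 0 < e t := sub_pos.2 ((hFanti t htI) (hmem₁ t htI) (hmem₂ t htI) h)
          exact mul_nonpos_iff.2 (Or.inr ⟨hu'.le, he'.le⟩)
        · have hez : e t = 0 := by simp only [hedef]; rw [h, sub_self]
          rw [hez, mul_zero]
        · have hu' : 0 < u t := sub_pos.2 (hmono (hmem₂ t htI) (hmem₁ t htI) h)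
          have he' : e t < 0 := sub_neg.2 ((hFanti t htI) (hmem₂ t htI) (hmem₁ t htI) h)
          exact mul_nonpos_iff.2 (Or.inl ⟨hu'.le, he'.le⟩)
      exact tail hud hsign hperu hu0
    · -- H strictly decreasing : reflect time
      have hanti : StrictAntiOn H (Icc m M) := by
        refine strictAntiOn_of_deriv_neg (convex_Icc m M) hHc ?_
        intro x hx
        rw [interior_Icc] at hx
        have hxm : x ∈ Icc m M := ⟨hx.1.le, hx.2.le⟩
        rw [(hHd x hxm).deriv]
        exact inv_lt_zero.2 (hσn x hxm)
      have hu0 : u 0 ≠ 0 := sub_ne_zero.2 (ne_of_gt (hanti hmρ₁ hmρ₂ hlt))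
      have hsign : ∀ t ∈ Ioo (0:ℝ) 1, 0 ≤ u t * e t := by
        intro t ht
        have htI : t ∈ Icc (0:ℝ) 1 := ⟨ht.1.le, ht.2.le⟩
        rcases lt_trichotomy (γ₁ t) (γ₂ t) with h | h | h
        · have hu' : 0 < u t := sub_pos.2 (hanti (hmem₁ t htI) (hmem₂ t htI) h)
          have he' : 0 < e t := sub_pos.2 ((hFanti t htI) (hmem₁ t htI) (hmem₂ t htI) h)
          exact (mul_pos hu' he').le
        · have hez : e t = 0 := by simp only [hedef]; rw [h, sub_self]
          rw [hez, mul_zero]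
        · have hu' : u t < 0 := sub_neg.2 (hanti (hmem₂ t htI) (hmem₁ t htI) h)
          have he' : e t < 0 := sub_neg.2 ((hFanti t htI) (hmem₂ t htI) (hmem₁ t htI) h)
          exact (mul_pos_of_neg_of_neg hu' he').le
      set ur : ℝ → ℝ := fun t => u (1 - t) with hurdef
      set er : ℝ → ℝ := fun t => -(e (1 - t)) with herdef
      have hur : ∀ t ∈ Icc (0:ℝ) 1, HasDerivWithinAt ur (er t) (Icc 0 1) t := by
        intro t ht
        have h1t : (1:ℝ) - t ∈ Icc (0:ℝ) 1 := ⟨by linarith [ht.2], by linarith [ht.1]⟩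
        have hrefl : HasDerivWithinAt (fun s : ℝ => 1 - s) (-1 : ℝ) (Icc 0 1) t := by
          simpa using ((hasDerivAt_id t).const_sub 1).hasDerivWithinAt
        have hmaps : MapsTo (fun s : ℝ => 1 - s) (Icc 0 1) (Icc 0 1) := by
          intro s hs
          simp only [mem_Icc] at hs ⊢
          constructor <;> linarith [hs.1, hs.2]
        have hcomp := (hud (1 - t) h1t).comp t hrefl hmaps
        exact hcomp.congr_deriv (by simp only [herdef]; ring)
      have hsr : ∀ t ∈ Ioo (0:ℝ) 1, ur t * er t ≤ 0 := by
        intro t ht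
        have h1t : (1:ℝ) - t ∈ Ioo (0:ℝ) 1 := ⟨by linarith [ht.2], by linarith [ht.1]⟩
        have := hsign (1 - t) h1t
        simp only [hurdef, herdef]
        nlinarith [this]
      have hperr : ur 0 = ur 1 := by
        simp only [hurdef]
        norm_num
        exact hperu.symm
      have hu0r : ur 0 ≠ 0 := by
        simp only [hurdef]
        norm_num
        rw [← hperu]
        exact hu0
      obtain ⟨hh1, hh2⟩ := tail hur hsr hperr hu0r
      have hhalfeq : (1:ℝ) - 1/2 = 1/2 := by norm_num
      constructor
      · rw [hurdef] at hh1
        simp only [hhalfeq] at hh1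
        exact hh1
      · rw [herdef] at hh2
        simp only [hhalfeq, neg_eq_zero] at hh2
        exact hh2
  obtain ⟨hneh, heh⟩ := hhalf
  have hhf : (1/2:ℝ) ∈ Icc (0:ℝ) 1 := by norm_num
  have heq : γ₁ (1/2) = γ₂ (1/2) := by
    have h1 : F (1/2) (γ₁ (1/2)) = F (1/2) (γ₂ (1/2)) := by
      rw [hedef] at heh
      exact sub_eq_zero.1 heh
    exact (hFanti _ hhf).injOn (hmem₁ _ hhf) (hmem₂ _ hhf) h1
  refine hneh ?_
  rw [hudef]
  simp only [heq, sub_self]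

/-! ### Putting everything together -/

lemma key {A B C : ℝ → ℝ} {a b c : ℝ}
    (hA : ContinuousOn A (Icc 0 1)) (hB : ContinuousOn B (Icc 0 1))
    (hC : ContinuousOn C (Icc 0 1))
    (hab : ¬ (a = 0 ∧ b = 0))
    (hR : ∀ t ∈ Icc (0:ℝ) 1, ∀ x : ℝ,
      0 < (a * A t + b * B t) * x ^ 2 + 2 * (b * C t - c * A t) * x - (c * B t + a * C t)) :
    {ρ : ℝ | ρ ≠ 0 ∧ ∃ γ : ℝ → ℝ, IsGeneralPeriodicOrbit A B C γ ∧ γ 0 = ρ}.encard ≤ 4 := by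
  set S := {ρ : ℝ | ρ ≠ 0 ∧ ∃ γ : ℝ → ℝ, IsGeneralPeriodicOrbit A B C γ ∧ γ 0 = ρ} with hSdef
  by_contra hcon
  push_neg at hcon
  have h5 : (5 : ℕ∞) ≤ S.encard := by
    have := Order.add_one_le_of_lt hcon
    have h45 : (4 : ℕ∞) + 1 = 5 := by norm_num
    rwa [h45] at this
  obtain ⟨T, hTS, hT5⟩ := Set.exists_subset_encard_eq h5
  have hfin : T.Finite := Set.finite_of_encard_eq_coe (by exact_mod_cast hT5)
  have hcard : hfin.toFinset.card = 5 := by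
    have h1 := hfin.encard_eq_coe_toFinset_card
    rw [hT5] at h1
    exact_mod_cast h1.symm
  set f := hfin.toFinset.orderEmbOfFin hcard with hfdef
  have hmemf : ∀ i : Fin 5, (f i) ∈ S := fun i =>
    hTS (hfin.mem_toFinset.1 (Finset.orderEmbOfFin_mem _ hcard i))
  have hmono : StrictMono f := f.strictMono
  have hsep : ∀ i j : Fin 5, i < j → ∃ τ, τ * (b * τ ^ 2 - a * τ + c) = 0 ∧
      f i < τ ∧ τ < f j := by
    intro i j hij
    obtain ⟨hiz, γ₁, ⟨hs₁, hp₁⟩, hv₁⟩ := hmemf i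
    obtain ⟨hjz, γ₂, ⟨hs₂, hp₂⟩, hv₂⟩ := hmemf j
    have hlt : γ₁ 0 < γ₂ 0 := by rw [hv₁, hv₂]; exact hmono hij
    obtain ⟨τ, hτ1, hτ2, hτ3⟩ := sep hA hB hC hR hs₁ hp₁ (hv₁ ▸ hiz) hs₂ hp₂ (hv₂ ▸ hjz) hlt
    exact ⟨τ, hτ1, by rw [← hv₁]; exact hτ2, by rw [← hv₂]; exact hτ3⟩
  obtain ⟨τ₀, hτ₀, h₀l, h₀r⟩ := hsep 0 1 (by decide)
  obtain ⟨τ₁, hτ₁, h₁l, h₁r⟩ := hsep 1 2 (by decide)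
  obtain ⟨τ₂, hτ₂, h₂l, h₂r⟩ := hsep 2 3 (by decide)
  obtain ⟨τ₃, hτ₃, h₃l, h₃r⟩ := hsep 3 4 (by decide)
  have h01 : τ₀ < τ₁ := by linarith
  have h12 : τ₁ < τ₂ := by linarith
  have h23 : τ₂ < τ₃ := by linarith
  have quad3 : ∀ x y z : ℝ, x < y → y < z →
      b * x ^ 2 - a * x + c = 0 → b * y ^ 2 - a * y + c = 0 → b * z ^ 2 - a * z + c = 0 →
      False := by
    intro x y z hxy hyz hx hy hz
    have e1 : (x - y) * (b * (x + y) - a) = 0 := by linear_combination hx - hy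
    have e2 : (y - z) * (b * (y + z) - a) = 0 := by linear_combination hy - hz
    have f1 : b * (x + y) - a = 0 := by
      rcases mul_eq_zero.1 e1 with h | h
      · exact absurd h (sub_ne_zero.2 hxy.ne)
      · exact h
    have f2 : b * (y + z) - a = 0 := by
      rcases mul_eq_zero.1 e2 with h | h
      · exact absurd h (sub_ne_zero.2 hyz.ne)
      · exact h
    have hb : b = 0 := by
      have h3 : b * (x - z) = 0 := by linear_combination f1 - f2
      rcases mul_eq_zero.1 h3 with h | h
      · exact h
      · exact absurd h (sub_ne_zero.2 (hxy.trans hyz).ne)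
    have ha : a = 0 := by
      rw [hb] at f1
      linarith
    exact hab ⟨ha, hb⟩
  have resolve : ∀ τ : ℝ, τ * (b * τ ^ 2 - a * τ + c) = 0 → τ ≠ 0 →
      b * τ ^ 2 - a * τ + c = 0 := by
    intro τ h hτ
    rcases mul_eq_zero.1 h with h' | h'
    · exact absurd h' hτ
    · exact h'
  by_cases hz1 : τ₁ = 0
  · have hn0 : τ₀ ≠ 0 := by intro h; rw [h] at h01; rw [hz1] at h01; exact lt_irrefl 0 h01
    have hn2 : τ₂ ≠ 0 := by intro h; rw [h] at h12; rw [hz1] at h12; exact lt_irrefl 0 h12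
    have hn3 : τ₃ ≠ 0 := by
      intro h; rw [h] at h23
      have : τ₂ < 0 := h23
      rw [hz1] at h12; linarith
    exact quad3 τ₀ τ₂ τ₃ (by linarith) h23
      (resolve τ₀ hτ₀ hn0) (resolve τ₂ hτ₂ hn2) (resolve τ₃ hτ₃ hn3)
  · by_cases hz2 : τ₂ = 0
    · have hn0 : τ₀ ≠ 0 := by intro h; rw [h] at h01; rw [hz2] at h12; linarith
      have hn3 : τ₃ ≠ 0 := by intro h; rw [h] at h23; rw [hz2] at h23; exact lt_irrefl 0 h23
      exact quad3 τ₀ τ₁ τ₃ h01 (by linarith)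
        (resolve τ₀ hτ₀ hn0) (resolve τ₁ hτ₁ hz1) (resolve τ₃ hτ₃ hn3)
    · by_cases hz0 : τ₀ = 0
      · have hn3 : τ₃ ≠ 0 := by intro h; rw [h] at h23; rw [hz0] at h01; linarith
        exact quad3 τ₁ τ₂ τ₃ h12 h23
          (resolve τ₁ hτ₁ hz1) (resolve τ₂ hτ₂ hz2) (resolve τ₃ hτ₃ hn3)
      · exact quad3 τ₀ τ₁ τ₂ h01 h12
          (resolve τ₀ hτ₀ hz0) (resolve τ₁ hτ₁ hz1) (resolve τ₂ hτ₂ hz2)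

end AbelAux

theorem general_abel_at_most_four_periodic_orbits
    (A B C : ℝ → ℝ)
    (hA : ContinuousOn A (Set.Icc 0 1)) (hB : ContinuousOn B (Set.Icc 0 1))
    (hC : ContinuousOn C (Set.Icc 0 1))
    (a b c : ℝ)
    (h_not_ident_zero : ¬ ∀ t ∈ Set.Icc (0:ℝ) 1, a * A t + b * B t = 0)
    (h_sign : (∀ t ∈ Set.Icc (0:ℝ) 1, 0 ≤ a * A t + b * B t) ∨
              (∀ t ∈ Set.Icc (0:ℝ) 1, a * A t + b * B t ≤ 0))
    (h_neg : ∀ t ∈ Set.Icc (0:ℝ) 1,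
      (b * C t - c * A t) ^ 2 + (a * A t + b * B t) * (c * B t + a * C t) < 0) :
    {ρ : ℝ | ρ ≠ 0 ∧ ∃ γ : ℝ → ℝ, IsGeneralPeriodicOrbit A B C γ ∧ γ 0 = ρ}.encard ≤ 4 := by
  have hab : ¬ (a = 0 ∧ b = 0) := by
    rintro ⟨ha, hb⟩
    have h1 := h_neg 0 ⟨le_rfl, zero_le_one⟩
    rw [ha, hb] at h1
    nlinarith [sq_nonneg (0 * C 0 - c * A 0), h1]
  rcases h_sign with hs | hs
  · apply AbelAux.key hA hB hC hab
    intro t ht x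
    have h1 := h_neg t ht
    have h2 := hs t ht
    have hα : 0 < a * A t + b * B t := by
      rcases lt_or_eq_of_le h2 with h | h
      · exact h
      · exfalso
        rw [← h] at h1
        nlinarith [sq_nonneg (b * C t - c * A t)]
    nlinarith [sq_nonneg ((a * A t + b * B t) * x + (b * C t - c * A t)), hα, h1]
  · have hab' : ¬ (-a = 0 ∧ -b = 0) := by
      rintro ⟨ha, hb⟩
      exact hab ⟨neg_eq_zero.1 ha, neg_eq_zero.1 hb⟩
    apply AbelAux.key (a := -a) (b := -b) (c := -c) hA hB hC hab'
    intro t ht x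
    have h1 := h_neg t ht
    have h2 := hs t ht
    have hα : 0 < -a * A t + -b * B t := by
      rcases lt_or_eq_of_le h2 with h | h
      · linarith
      · exfalso
        rw [h] at h1
        nlinarith [sq_nonneg (b * C t - c * A t)]
    have h1' : (-b * C t - -c * A t) ^ 2 + (-a * A t + -b * B t) * (-c * B t + -a * C t) < 0 := by
      have heq : (-b * C t - -c * A t) ^ 2 + (-a * A t + -b * B t) * (-c * B t + -a * C t)
          = (b * C t - c * A t) ^ 2 + (a * A t + b * B t) * (c * B t + a * C t) := by ring
      rw [heq]
      exact h1
    nlinarith [sq_nonneg ((-a * A t + -b * B t) * x + (-b * C t - -c * A t)), hα, h1']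
end
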